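/- arXiv:1707.06864 — 4 statements merged into one kernel-verified Lean document; each statement's English description precedes it below -/
import Mathlib

section
/- The maximal length of an element of G(e,e,n) over the generating set X = {t_0, ..., t_{e-1}, s_3, ..., s_n} equals n(n-1). -/
open Matrix Complex
open scoped Classical

/-- `ζ_e = exp(2πi/e)`. -/
noncomputable def zeta (e : ℕ) : ℂ := Complex.exp (2 * Real.pi * Complex.I / e)

/-- The generator `t_i` of `G(e,e,n)`: the monomial matrix with upper-left `2×2` block
`[[0, ζ_e^{-i}],[ζ_e^i, 0]]` and identity elsewhere. -/
noncomputable def tmat (e n : ℕ) (i : ℤ) : Matrix (Fin n) (Fin n) ℂ :=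
  Matrix.of fun a b =>
    if (a : ℕ) = 0 ∧ (b : ℕ) = 1 then zeta e ^ (-i)
    else if (a : ℕ) = 1 ∧ (b : ℕ) = 0 then zeta e ^ i
    else if a = b ∧ 2 ≤ (a : ℕ) then 1 else 0

/-- The generator `s_j` of `G(e,e,n)`: the permutation matrix of the transposition
exchanging coordinates `j-1` and `j` (1-indexed), i.e. indices `j-2` and `j-1` (0-indexed). -/
def smat (n : ℕ) (j : ℕ) : Matrix (Fin n) (Fin n) ℂ :=
  Matrix.of fun a b =>
    if (a : ℕ) = j - 2 ∧ (b : ℕ) = j - 1 then 1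
    else if (a : ℕ) = j - 1 ∧ (b : ℕ) = j - 2 then 1
    else if a = b ∧ (a : ℕ) ≠ j - 2 ∧ (a : ℕ) ≠ j - 1 then 1 else 0

/-- The generating set `X = {t_0, …, t_{e-1}, s_3, …, s_n}` of `G(e,e,n)`. -/
noncomputable def Xset (e n : ℕ) : Set (Matrix (Fin n) (Fin n) ℂ) :=
  {w | (∃ i : ℕ, i < e ∧ w = tmat e n i) ∨ (∃ j : ℕ, 3 ≤ j ∧ j ≤ n ∧ w = smat n j)}

/-- Membership in `G(e,e,n)`: `w` is monomial, its nonzero entries are `e`-th roots of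
unity, and the product of its nonzero entries is `1`. -/
def IsGeen (e n : ℕ) (w : Matrix (Fin n) (Fin n) ℂ) : Prop :=
  (∀ i, ∃! j, w i j ≠ 0) ∧ (∀ j, ∃! i, w i j ≠ 0) ∧
  (∀ i j, w i j ≠ 0 → w i j ^ e = 1) ∧
  (∏ i, ∏ j, (if w i j ≠ 0 then w i j else 1)) = 1

/-- The length `ℓ(w)` of `w` over the generating set `X` (all generators are
involutions, so positive words suffice). -/
noncomputable def len (e n : ℕ) (w : Matrix (Fin n) (Fin n) ℂ) : ℕ :=
  sInf {r | ∃ l : List (Matrix (Fin n) (Fin n) ℂ),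
    (∀ x ∈ l, x ∈ Xset e n) ∧ l.length = r ∧ l.prod = w}

/-- Left divisibility: `w' ≼ w` iff `w = w' w''` with `w'' ∈ G(e,e,n)` and
`ℓ(w) = ℓ(w') + ℓ(w'')`. -/
noncomputable def ldvd (e n : ℕ) (w' w : Matrix (Fin n) (Fin n) ℂ) : Prop :=
  ∃ w'', IsGeen e n w'' ∧ w = w' * w'' ∧ len e n w = len e n w' + len e n w''

/-- Right divisibility: `w' ≼_r w` iff `w = w'' w'` with `w'' ∈ G(e,e,n)` and
`ℓ(w) = ℓ(w'') + ℓ(w')`. -/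
noncomputable def rdvd (e n : ℕ) (w' w : Matrix (Fin n) (Fin n) ℂ) : Prop :=
  ∃ w'', IsGeen e n w'' ∧ w = w'' * w' ∧ len e n w = len e n w'' + len e n w'

/-- The element `λ = diag(ζ_e^{-(n-1)}, ζ_e, …, ζ_e)`. -/
noncomputable def lam (e n : ℕ) : Matrix (Fin n) (Fin n) ℂ :=
  Matrix.diagonal (fun i => if (i : ℕ) = 0 then zeta e ^ (-(n - 1 : ℤ)) else zeta e)

namespace S6

variable (e n : ℕ)

noncomputable def chi (k : ZMod e) : ℂ := zeta e ^ k.val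

noncomputable def Mm (a : Fin n → ZMod e) (σ : Equiv.Perm (Fin n)) :
    Matrix (Fin n) (Fin n) ℂ :=
  Matrix.of fun i j => if i = σ j then chi e (a j) else 0

variable {e n}

lemma hprim (he : 2 ≤ e) : IsPrimitiveRoot (zeta e) e :=
  Complex.isPrimitiveRoot_exp e (by omega)

lemma zeta_ne_zero (he : 2 ≤ e) : zeta e ≠ 0 := Complex.exp_ne_zero _

lemma zeta_pow_e (he : 2 ≤ e) : zeta e ^ e = 1 := (hprim he).pow_eq_one

lemma zeta_pow_mod (he : 2 ≤ e) (m : ℕ) : zeta e ^ (m % e) = zeta e ^ m := by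
  conv_rhs => rw [← Nat.div_add_mod m e]
  rw [pow_add, pow_mul, zeta_pow_e he, one_pow, one_mul]

lemma chi_ne_zero (he : 2 ≤ e) (k : ZMod e) : chi e k ≠ 0 :=
  pow_ne_zero _ (zeta_ne_zero he)

lemma chi_zero (he : 2 ≤ e) : chi e (0 : ZMod e) = 1 := by
  haveI : NeZero e := ⟨by omega⟩
  simp [chi, ZMod.val_zero]

lemma chi_add (he : 2 ≤ e) (k l : ZMod e) : chi e (k + l) = chi e k * chi e l := by
  haveI : NeZero e := ⟨by omega⟩
  rw [chi, ZMod.val_add, zeta_pow_mod he, pow_add]; rfl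

lemma chi_inj (he : 2 ≤ e) {k l : ZMod e} (h : chi e k = chi e l) : k = l := by
  haveI : NeZero e := ⟨by omega⟩
  have := (hprim he).pow_inj (ZMod.val_lt k) (ZMod.val_lt l) h
  exact ZMod.val_injective e this

lemma chi_intCast (he : 2 ≤ e) (m : ℤ) : chi e ((m : ZMod e)) = zeta e ^ m := by
  haveI : NeZero e := ⟨by omega⟩
  have hd : (e : ℤ) ∣ (((m : ZMod e).val : ℤ) - m) := by
    rw [← ZMod.intCast_zmod_eq_zero_iff_dvd]
    push_cast
    simp [ZMod.natCast_val, ZMod.cast_id]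
  obtain ⟨t, ht⟩ := hd
  have hm : (((m : ZMod e).val : ℤ)) = m + e * t := by linarith
  calc chi e (m : ZMod e) = zeta e ^ (((m:ZMod e).val : ℤ)) := by rw [chi, zpow_natCast]
  _ = zeta e ^ (m + (e:ℤ) * t) := by rw [hm]
  _ = zeta e ^ m := by
      rw [zpow_add₀ (zeta_ne_zero he), _root_.zpow_mul, zpow_natCast, zeta_pow_e he,
        _root_.one_zpow, mul_one]

lemma chi_natCast (he : 2 ≤ e) (m : ℕ) : chi e ((m : ZMod e)) = zeta e ^ m := by
  have := chi_intCast he (m : ℤ)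
  rw [zpow_natCast] at this
  simpa using this

lemma Mm_mul (a b : Fin n → ZMod e) (σ τ : Equiv.Perm (Fin n)) (he : 2 ≤ e) :
    Mm e n a σ * Mm e n b τ = Mm e n (a ∘ τ + b) (σ * τ) := by
  ext i j
  rw [Matrix.mul_apply]
  rw [Finset.sum_eq_single (τ j)]
  · simp only [Mm, Matrix.of_apply, Equiv.Perm.mul_apply, Pi.add_apply, Function.comp_apply]
    by_cases h : i = σ (τ j)
    · simp [h, chi_add he]
    · simp [h]
  · intro b' _ hb
    simp [Mm, hb]
  · simp

lemma Mm_one (he : 2 ≤ e) : Mm e n 0 1 = (1 : Matrix (Fin n) (Fin n) ℂ) := by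
  ext i j
  simp only [Mm, Matrix.of_apply, Equiv.Perm.one_apply, Pi.zero_apply, chi_zero he,
    Matrix.one_apply]

lemma Mm_inj (he : 2 ≤ e) {a b : Fin n → ZMod e} {σ τ : Equiv.Perm (Fin n)}
    (h : Mm e n a σ = Mm e n b τ) : a = b ∧ σ = τ := by
  have hperm : σ = τ := by
    apply Equiv.ext
    intro j
    by_contra hne
    have h1 : Mm e n a σ (σ j) j = Mm e n b τ (σ j) j := by rw [h]
    simp only [Mm, Matrix.of_apply, if_pos rfl] at h1
    rw [if_neg hne] at h1
    exact chi_ne_zero he _ h1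
  constructor
  · funext j
    have h1 : Mm e n a σ (σ j) j = Mm e n b τ (σ j) j := by rw [h]
    subst hperm
    simp only [Mm, Matrix.of_apply, if_pos rfl] at h1
    exact chi_inj he h1
  · exact hperm


variable (e n)

/-- transposition of positions `p, p+1`. -/
def sw (p : ℕ) (h : p + 1 < n) : Equiv.Perm (Fin n) :=
  Equiv.swap ⟨p, by omega⟩ ⟨p + 1, h⟩

/-- charge vector of the generator `t_i`. -/
def tv (i : ZMod e) : Fin n → ZMod e :=
  fun j => if (j : ℕ) = 0 then i else if (j : ℕ) = 1 then -i else 0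

variable {e n}

lemma tmat_eq (he : 2 ≤ e) (hn : 2 ≤ n) (i : ℤ) :
    tmat e n i = Mm e n (tv e n ((i : ZMod e))) (sw n 0 (by omega)) := by
  ext a b
  simp only [tmat, Mm, tv, sw, Matrix.of_apply, Equiv.swap_apply_def]
  rw [show zeta e ^ (-i) = chi e ((-i : ℤ) : ZMod e) from (chi_intCast he _).symm,
     show zeta e ^ i = chi e ((i : ℤ) : ZMod e) from (chi_intCast he _).symm]
  have h0 := chi_zero he
  push_cast
  simp only [Fin.ext_iff]
  split_ifs <;> simp_all <;> omega

lemma smat_eq (he : 2 ≤ e) (j : ℕ) (h3 : 3 ≤ j) (hj : j ≤ n) :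
    smat n j = Mm e n 0 (sw n (j - 2) (by omega)) := by
  ext a b
  simp only [smat, Mm, sw, Matrix.of_apply, Equiv.swap_apply_def, Pi.zero_apply,
    chi_zero he]
  simp only [Fin.ext_iff]
  split_ifs <;> simp_all <;> omega


lemma sw_apply_ne {p : ℕ} (h : p + 1 < n) {r : Fin n} (h1 : (r : ℕ) ≠ p)
    (h2 : (r : ℕ) ≠ p + 1) : sw n p h r = r :=
  Equiv.swap_apply_of_ne_of_ne (fun hh => h1 (by simpa [Fin.ext_iff] using hh))
    (fun hh => h2 (by simpa [Fin.ext_iff] using hh))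

lemma sw_apply_left {p : ℕ} (h : p + 1 < n) : sw n p h ⟨p, by omega⟩ = ⟨p + 1, h⟩ :=
  Equiv.swap_apply_left _ _

lemma sw_apply_right {p : ℕ} (h : p + 1 < n) : sw n p h ⟨p + 1, h⟩ = ⟨p, by omega⟩ :=
  Equiv.swap_apply_right _ _

lemma sw_sq {p : ℕ} (h : p + 1 < n) : sw n p h * sw n p h = 1 :=
  Equiv.swap_mul_self _ _

variable (e n)

/-- abstract shape of a generator. -/
def Letter (x : Matrix (Fin n) (Fin n) ℂ) : Prop :=
  ∃ (p : ℕ) (h : p + 1 < n) (b : Fin n → ZMod e),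
    x = Mm e n b (sw n p h) ∧
    (∀ r : Fin n, (r : ℕ) ≠ p → (r : ℕ) ≠ p + 1 → b r = 0) ∧
    b ⟨p, by omega⟩ + b ⟨p + 1, h⟩ = 0 ∧
    (p ≠ 0 → b = 0)

variable {e n}

lemma letter_of_mem (he : 2 ≤ e) (hn : 2 ≤ n) {x} (hx : x ∈ Xset e n) :
    Letter e n x := by
  rcases hx with ⟨i, _, rfl⟩ | ⟨j, h3, hj, rfl⟩
  · refine ⟨0, by omega, tv e n (((i : ℤ) : ZMod e)), tmat_eq he hn i, ?_, ?_, ?_⟩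
    · intro r h0 h1; simp [tv, h0, h1]
    · simp [tv]
    · simp
  · refine ⟨j - 2, by omega, 0, smat_eq he j h3 hj, by simp, by simp, by simp⟩

lemma T_mem (he : 2 ≤ e) (hn : 2 ≤ n) (i : ZMod e) :
    Mm e n (tv e n i) (sw n 0 (by omega)) ∈ Xset e n := by
  haveI : NeZero e := ⟨by omega⟩
  refine Or.inl ⟨i.val, ZMod.val_lt i, ?_⟩
  rw [tmat_eq he hn (i.val : ℤ)]
  push_cast
  rw [ZMod.natCast_val, ZMod.cast_id]

lemma S_mem (he : 2 ≤ e) (k : ℕ) (h1 : 1 ≤ k) (h2 : k + 1 < n) :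
    Mm e n 0 (sw n k h2) ∈ Xset e n := by
  refine Or.inr ⟨k + 2, by omega, by omega, ?_⟩
  rw [smat_eq he (k + 2) (by omega) (by omega)]
  rfl

lemma letter_sq (he : 2 ≤ e) {x} (hx : Letter e n x) : x * x = 1 := by
  obtain ⟨p, h, b, rfl, hb, hsum, -⟩ := hx
  rw [Mm_mul _ _ _ _ he, sw_sq h]
  have hbb : (b ∘ (sw n p h)) + b = 0 := by
    funext r
    by_cases h1 : (r : ℕ) = p
    · have hr : r = ⟨p, by omega⟩ := Fin.ext h1
      rw [hr]
      simp only [Pi.add_apply, Function.comp_apply, sw_apply_left h, Pi.zero_apply]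
      rw [add_comm]; exact hsum
    · by_cases h2 : (r : ℕ) = p + 1
      · have hr : r = ⟨p + 1, h⟩ := Fin.ext h2
        rw [hr]
        simp only [Pi.add_apply, Function.comp_apply, sw_apply_right h, Pi.zero_apply]
        exact hsum
      · simp [sw_apply_ne h h1 h2, hb r h1 h2]
  rw [hbb, Mm_one he]

lemma letter_sum (he : 2 ≤ e) {p : ℕ} {h : p + 1 < n} {b : Fin n → ZMod e}
    (hb : ∀ r : Fin n, (r : ℕ) ≠ p → (r : ℕ) ≠ p + 1 → b r = 0)
    (hsum : b ⟨p, by omega⟩ + b ⟨p + 1, h⟩ = 0) : ∑ r, b r = 0 := by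
  have hsub : ({⟨p, by omega⟩, ⟨p + 1, h⟩} : Finset (Fin n)) ⊆ Finset.univ :=
    Finset.subset_univ _
  have := Finset.sum_subset hsub (fun r _ hr => by
    apply hb r <;> intro hh <;> apply hr <;> simp [Finset.mem_insert, Fin.ext_iff, hh])
  rw [← this, Finset.sum_pair (by simp [Fin.ext_iff])]
  exact hsum

/-- the charge vector of `λ`. -/
def lamA (e n : ℕ) : Fin n → ZMod e :=
  fun i => if (i : ℕ) = 0 then ((-(n - 1 : ℤ) : ℤ) : ZMod e) else 1

lemma exists_step {Q : ℕ → Prop} : ∀ t2 t1, t1 ≤ t2 → Q t1 → ¬ Q t2 →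
    ∃ t, t1 ≤ t ∧ t < t2 ∧ Q t ∧ ¬ Q (t + 1) := by
  intro t2
  induction t2 with
  | zero =>
    intro t1 h1 hq hnq
    interval_cases t1
    exact absurd hq hnq
  | succ s ih =>
    intro t1 h1 hq hnq
    by_cases hs : Q s
    · have ht1 : t1 ≤ s := by
        rcases Nat.lt_succ_iff_lt_or_eq.mp (Nat.lt_succ_of_le h1) with h | h
        · omega
        · exact absurd (h ▸ hq) hnq
      exact ⟨s, ht1, Nat.lt_succ_self s, hs, hnq⟩
    · have ht1 : t1 ≠ s + 1 := fun h => hnq (h ▸ hq)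
      obtain ⟨t, a, b, c, d⟩ := ih t1 (by omega) hq hs
      exact ⟨t, a, by omega, c, d⟩

lemma swap_lt_iff {n p : ℕ} (hp : p + 1 < n) {px py : Fin n}
    (hA : ¬(px = ⟨p, by omega⟩ ∧ py = ⟨p + 1, hp⟩))
    (hB : ¬(py = ⟨p, by omega⟩ ∧ px = ⟨p + 1, hp⟩)) :
    (((Equiv.swap (⟨p, by omega⟩ : Fin n) ⟨p + 1, hp⟩) px : Fin n) : ℕ) <
      (((Equiv.swap (⟨p, by omega⟩ : Fin n) ⟨p + 1, hp⟩) py : Fin n) : ℕ) ↔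
      (px : ℕ) < (py : ℕ) := by
  simp only [Equiv.swap_apply_def, apply_ite (Fin.val : Fin n → ℕ), Fin.ext_iff,
    Fin.val_mk, not_and] at hA hB ⊢
  split_ifs <;> omega

variable {e n : ℕ}

theorem lower_bound (he : 2 ≤ e) (hn : 2 ≤ n) (l : List (Matrix (Fin n) (Fin n) ℂ))
    (hl : ∀ x ∈ l, x ∈ Xset e n)
    (hprod : l.prod = Mm e n (lamA e n) 1) :
    n * (n - 1) ≤ l.length := by
  classical
  haveI : NeZero e := ⟨by omega⟩
  set N := l.length with hN
  have hdata : ∀ t : Fin N, Letter e n (l.get t) :=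
    fun t => letter_of_mem he hn (hl _ (List.get_mem l t))
  choose P HP B shape hb hbsum hbz using hdata
  -- prefix products have model form
  have pref : ∀ t : ℕ, ∃ (a : Fin n → ZMod e) (σ : Equiv.Perm (Fin n)),
      (l.take t).prod = Mm e n a σ := by
    intro t
    induction t with
    | zero => exact ⟨0, 1, by simp [Mm_one he]⟩
    | succ s ih =>
      obtain ⟨a, σ, hs⟩ := ih
      by_cases hsN : s < N
      · exact ⟨a ∘ (sw n (P ⟨s, hsN⟩) (HP ⟨s, hsN⟩)) + B ⟨s, hsN⟩,
          σ * sw n (P ⟨s, hsN⟩) (HP ⟨s, hsN⟩), by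
          rw [List.prod_take_succ l s hsN, hs,
            show l[s] = l.get ⟨s, hsN⟩ from rfl, shape ⟨s, hsN⟩, Mm_mul _ _ _ _ he]⟩
      · have heq : l.take (s + 1) = l.take s := by
          rw [List.take_of_length_le (by omega), List.take_of_length_le (by omega)]
        exact ⟨a, σ, heq ▸ hs⟩
  choose A S hAS using pref
  -- endpoints
  obtain ⟨hA0, hS0⟩ := Mm_inj he (show Mm e n 0 1 = Mm e n (A 0) (S 0) by
    rw [Mm_one he, ← hAS 0]; simp)
  obtain ⟨hAN, hSN⟩ := Mm_inj he (show Mm e n (lamA e n) 1 = Mm e n (A N) (S N) by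
    rw [← hprod, ← hAS N, List.take_of_length_le (le_of_eq hN.symm)])
  -- step relations
  have hstep : ∀ (t : ℕ) (ht : t < N),
      A (t + 1) = A t ∘ (sw n (P ⟨t, ht⟩) (HP ⟨t, ht⟩)) + B ⟨t, ht⟩ ∧
      S (t + 1) = S t * sw n (P ⟨t, ht⟩) (HP ⟨t, ht⟩) := by
    intro t ht
    refine Mm_inj he ?_
    rw [← hAS (t + 1), List.prod_take_succ l t ht, hAS t,
      show l[t] = l.get ⟨t, ht⟩ from rfl, shape ⟨t, ht⟩, Mm_mul _ _ _ _ he]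
  have hSinv : ∀ (t : ℕ) (ht : t < N) (z : Fin n),
      (S (t + 1))⁻¹ z = sw n (P ⟨t, ht⟩) (HP ⟨t, ht⟩) ((S t)⁻¹ z) := by
    intro t ht z
    rw [(hstep t ht).2, _root_.mul_inv_rev]
    simp only [sw, Equiv.swap_inv, Equiv.Perm.mul_apply]
  -- Claim 1 : every charged item visits position 0
  have visit : ∀ y : Fin n, (y : ℕ) ≠ 0 → ∃ t, t ≤ N ∧ (((S t)⁻¹ y : Fin n) : ℕ) = 0 := by
    intro y hy
    by_contra hc
    push_neg at hc
    have hzero : ∀ t, t ≤ N → A t ((S t)⁻¹ y) = 0 := by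
      intro t
      induction t with
      | zero => intro _; rw [← hA0]; rfl
      | succ s ih =>
        intro hs1
        have hsN : s < N := by omega
        set t' : Fin N := ⟨s, hsN⟩ with ht'
        set τ := sw n (P t') (HP t') with hτ
        have hu : (S (s + 1))⁻¹ y = τ ((S s)⁻¹ y) := hSinv s hsN y
        have huu : τ ((S (s + 1))⁻¹ y) = (S s)⁻¹ y := by
          rw [hu, hτ, sw]; exact Equiv.swap_apply_self _ _ _
        have hBu : B t' ((S (s + 1))⁻¹ y) = 0 := by
          by_cases hp0 : P t' = 0
          · refine hb t' _ ?_ ?_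
            · rw [hp0]; exact hc (s + 1) hs1
            · intro h1
              apply hc s (by omega)
              rw [← huu]
              have hval : ((S (s + 1))⁻¹ y) = (⟨P t' + 1, HP t'⟩ : Fin n) := Fin.ext h1
              rw [hval, hτ, sw_apply_right (HP t')]
              simp [hp0]
          · rw [hbz t' hp0]; rfl
        calc A (s + 1) ((S (s + 1))⁻¹ y)
            = A s (τ ((S (s + 1))⁻¹ y)) + B t' ((S (s + 1))⁻¹ y) := by
              rw [(hstep s hsN).1]; rfl
          _ = 0 := by rw [huu, ih (by omega), hBu, add_zero]
    have hfin := hzero N le_rfl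
    rw [← hSN] at hfin
    simp only [inv_one, Equiv.Perm.one_apply] at hfin
    rw [← hAN] at hfin
    unfold lamA at hfin
    rw [if_neg hy] at hfin
    have hv := congrArg ZMod.val hfin
    rw [ZMod.val_one_eq_one_mod, ZMod.val_zero] at hv
    have := Nat.le_of_dvd one_pos (Nat.dvd_of_mod_eq_zero hv)
    omega
  -- flip lemma
  have flip : ∀ (t : ℕ) (ht : t < N) (x y : Fin n),
      ¬(S t ⟨P ⟨t, ht⟩, by have := HP ⟨t, ht⟩; omega⟩ = x ∧ S t ⟨P ⟨t, ht⟩ + 1, HP ⟨t, ht⟩⟩ = y) →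
      ¬(S t ⟨P ⟨t, ht⟩, by have := HP ⟨t, ht⟩; omega⟩ = y ∧ S t ⟨P ⟨t, ht⟩ + 1, HP ⟨t, ht⟩⟩ = x) →
      ((((S (t + 1))⁻¹ x : Fin n) : ℕ) < (((S (t + 1))⁻¹ y : Fin n) : ℕ) ↔
        (((S t)⁻¹ x : Fin n) : ℕ) < (((S t)⁻¹ y : Fin n) : ℕ)) := by
    intro t ht x y hA' hB'
    set t' : Fin N := ⟨t, ht⟩
    set p := P t'
    have hp : p + 1 < n := HP t'
    have hxA : ¬((S t)⁻¹ x = ⟨p, by omega⟩ ∧ (S t)⁻¹ y = ⟨p + 1, hp⟩) := by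
      rintro ⟨u1, u2⟩
      exact hA' ⟨by rw [← u1]; exact Equiv.apply_symm_apply _ _,
                 by rw [← u2]; exact Equiv.apply_symm_apply _ _⟩
    have hxB : ¬((S t)⁻¹ y = ⟨p, by omega⟩ ∧ (S t)⁻¹ x = ⟨p + 1, hp⟩) := by
      rintro ⟨u1, u2⟩
      exact hB' ⟨by rw [← u1]; exact Equiv.apply_symm_apply _ _,
                 by rw [← u2]; exact Equiv.apply_symm_apply _ _⟩
    rw [hSinv t ht x, hSinv t ht y]
    exact swap_lt_iff hp hxA hxB
  -- every ordered pair appears as the swapped pair of some step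
  have key : ∀ (x y : Fin n), x ≠ y → ∀ (t : ℕ) (ht : t < N),
      ((((S t)⁻¹ x : Fin n) : ℕ) < (((S t)⁻¹ y : Fin n) : ℕ)) →
      ¬((((S (t+1))⁻¹ x : Fin n) : ℕ) < (((S (t+1))⁻¹ y : Fin n) : ℕ)) →
      (S t ⟨P ⟨t, ht⟩, by have := HP ⟨t, ht⟩; omega⟩ = x ∧
        S t ⟨P ⟨t, ht⟩ + 1, HP ⟨t, ht⟩⟩ = y) := by
    intro x y hxy t ht hQ hQ'
    by_contra hno
    by_cases hyx : (S t ⟨P ⟨t, ht⟩, by have := HP ⟨t, ht⟩; omega⟩ = y ∧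
        S t ⟨P ⟨t, ht⟩ + 1, HP ⟨t, ht⟩⟩ = x)
    · obtain ⟨h1, h2⟩ := hyx
      have e1 : (S t)⁻¹ y = ⟨P ⟨t, ht⟩, by have := HP ⟨t, ht⟩; omega⟩ := by
        rw [← h1]; exact Equiv.symm_apply_apply _ _
      have e2 : (S t)⁻¹ x = ⟨P ⟨t, ht⟩ + 1, HP ⟨t, ht⟩⟩ := by
        rw [← h2]; exact Equiv.symm_apply_apply _ _
      rw [e1, e2] at hQ
      simp at hQ
    · exact hQ' ((flip t ht x y hno hyx).mpr hQ)
  -- the map from steps to ordered pairs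
  have main : ∀ (x y : Fin n), x ≠ y → ∃ (t : ℕ) (ht : t < N),
      (S t ⟨P ⟨t, ht⟩, by have := HP ⟨t, ht⟩; omega⟩ = x ∧
        S t ⟨P ⟨t, ht⟩ + 1, HP ⟨t, ht⟩⟩ = y) := by
    intro x y hxy
    have hinj : ∀ t : ℕ, (S t)⁻¹ x ≠ (S t)⁻¹ y := fun t hh => hxy (by
      have := congrArg (S t) hh
      simpa [Equiv.Perm.inv_def] using this)
    rcases Nat.lt_or_ge (x : ℕ) (y : ℕ) with hv | hv
    · -- x < y : use the visit of y
      obtain ⟨ts, htsN, hts⟩ := visit y (by omega)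
      have hQ0 : (((S 0)⁻¹ x : Fin n) : ℕ) < (((S 0)⁻¹ y : Fin n) : ℕ) := by
        rw [← hS0]; simpa using hv
      have hQts : ¬((((S ts)⁻¹ x : Fin n) : ℕ) < (((S ts)⁻¹ y : Fin n) : ℕ)) := by
        rw [hts]; omega
      obtain ⟨t, -, htlt, hQt, hQt1⟩ := exists_step (Q := fun t =>
        (((S t)⁻¹ x : Fin n) : ℕ) < (((S t)⁻¹ y : Fin n) : ℕ)) ts 0 (by omega) hQ0 hQts
      have htN : t < N := by omega
      exact ⟨t, htN, key x y hxy t htN hQt hQt1⟩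
    · -- y < x : use the visit of x, then the return
      have hxyne : (x : ℕ) ≠ (y : ℕ) := fun hh => hxy (Fin.ext hh)
      obtain ⟨ts, htsN, hts⟩ := visit x (by omega)
      have hQts : (((S ts)⁻¹ x : Fin n) : ℕ) < (((S ts)⁻¹ y : Fin n) : ℕ) := by
        rw [hts]
        have := (hinj ts)
        replace this := Fin.val_ne_of_ne this
        omega
      have hQN : ¬((((S N)⁻¹ x : Fin n) : ℕ) < (((S N)⁻¹ y : Fin n) : ℕ)) := by
        rw [← hSN]; simpa using by omega
      obtain ⟨t, -, htlt, hQt, hQt1⟩ := exists_step (Q := fun t =>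
        (((S t)⁻¹ x : Fin n) : ℕ) < (((S t)⁻¹ y : Fin n) : ℕ)) N ts htsN hQts hQN
      exact ⟨t, htlt, key x y hxy t htlt hQt hQt1⟩
  -- counting
  set F : Fin N → Fin n × Fin n := fun t =>
    (S t ⟨P t, by have := HP t; omega⟩, S t ⟨P t + 1, HP t⟩) with hF
  have hsub : Finset.univ.offDiag ⊆ Finset.image F Finset.univ := by
    intro pq hpq
    rw [Finset.mem_offDiag] at hpq
    obtain ⟨t, ht, h1, h2⟩ := main pq.1 pq.2 hpq.2.2
    rw [Finset.mem_image]
    refine ⟨⟨t, ht⟩, Finset.mem_univ _, ?_⟩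
    rw [hF]
    exact Prod.ext h1 h2
  have hcard := Finset.card_le_card hsub
  rw [Finset.offDiag_card, Finset.card_univ, Fintype.card_fin] at hcard
  have himg : (Finset.image F Finset.univ).card ≤ N := by
    calc (Finset.image F Finset.univ).card ≤ (Finset.univ : Finset (Fin N)).card :=
          Finset.card_image_le
    _ = N := by rw [Finset.card_univ, Fintype.card_fin]
  have hNN : n * n - n ≤ N := le_trans hcard himg
  have hmm : n * (n - 1) = n * n - n := by
    cases n with
    | zero => simp
    | succ m => rw [Nat.succ_sub_one, Nat.mul_succ, Nat.add_sub_cancel]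
  omega


lemma chi_one (he : 2 ≤ e) : chi e (1 : ZMod e) = zeta e := by
  haveI : Fact (1 < e) := ⟨by omega⟩
  rw [chi, ZMod.val_one, pow_one]

lemma chi_sum (he : 2 ≤ e) {ι : Type*} (s : Finset ι) (f : ι → ZMod e) :
    chi e (∑ i ∈ s, f i) = ∏ i ∈ s, chi e (f i) := by
  classical
  induction s using Finset.cons_induction with
  | empty => simp [chi_zero he]
  | cons i s hi ih => rw [Finset.sum_cons, Finset.prod_cons, chi_add he, ih]

lemma prod_entries (he : 2 ≤ e) (a : Fin n → ZMod e) (σ : Equiv.Perm (Fin n)) :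
    (∏ i, ∏ j, (if Mm e n a σ i j ≠ 0 then Mm e n a σ i j else 1)) =
      chi e (∑ j, a j) := by
  classical
  have inner : ∀ i, (∏ j, (if Mm e n a σ i j ≠ 0 then Mm e n a σ i j else 1)) =
      chi e (a (σ⁻¹ i)) := by
    intro i
    rw [Finset.prod_eq_single (σ⁻¹ i)]
    · have hcond : i = σ (σ⁻¹ i) := (Equiv.apply_symm_apply σ i).symm
      simp only [Mm, Matrix.of_apply, if_pos hcond]
      rw [if_pos (chi_ne_zero he _)]
    · intro b _ hb
      have : ¬ (i = σ b) := fun hh => hb (by rw [hh, Equiv.Perm.inv_def, Equiv.symm_apply_apply])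
      simp only [Mm, Matrix.of_apply, if_neg this]
      simp
    · intro h; exact absurd (Finset.mem_univ _) h
  calc (∏ i, ∏ j, (if Mm e n a σ i j ≠ 0 then Mm e n a σ i j else 1))
      = ∏ i, chi e (a (σ⁻¹ i)) := Finset.prod_congr rfl (fun i _ => inner i)
    _ = ∏ j, chi e (a j) := Equiv.prod_comp σ⁻¹ (fun j => chi e (a j))
    _ = chi e (∑ j, a j) := (chi_sum he _ _).symm

lemma geen_of_model (he : 2 ≤ e) (a : Fin n → ZMod e) (σ : Equiv.Perm (Fin n))
    (hsum : ∑ r, a r = 0) : IsGeen e n (Mm e n a σ) := by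
  classical
  refine ⟨?_, ?_, ?_, ?_⟩
  · intro i
    refine ⟨σ⁻¹ i, ?_, ?_⟩
    · simp only [Mm, Matrix.of_apply, if_pos (show i = σ (σ⁻¹ i) from (Equiv.apply_symm_apply σ i).symm)]
      exact chi_ne_zero he _
    · intro j hj
      have hij : i = σ j := by
        by_contra hne
        exact hj (by simp only [Mm, Matrix.of_apply, if_neg hne])
      rw [hij, Equiv.Perm.inv_def, Equiv.symm_apply_apply]
  · intro j
    refine ⟨σ j, ?_, ?_⟩
    · simp only [Mm, Matrix.of_apply, if_pos rfl]
      exact chi_ne_zero he _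
    · intro i hi
      by_contra hne
      exact hi (by simp only [Mm, Matrix.of_apply, if_neg hne])
  · intro i j hij
    simp only [Mm, Matrix.of_apply] at hij ⊢
    by_cases hh : i = σ j
    · rw [if_pos hh]
      rw [chi, ← pow_mul, mul_comm, pow_mul, zeta_pow_e he, one_pow]
    · rw [if_neg hh] at hij; exact absurd rfl hij
  · rw [prod_entries he, hsum, chi_zero he]

lemma geen_to_model (he : 2 ≤ e) {w : Matrix (Fin n) (Fin n) ℂ} (hw : IsGeen e n w) :
    ∃ (a : Fin n → ZMod e) (σ : Equiv.Perm (Fin n)),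
      (∑ r, a r = 0) ∧ w = Mm e n a σ := by
  classical
  haveI : NeZero e := ⟨by omega⟩
  obtain ⟨hrow, hcol, hroot, hprodw⟩ := hw
  have hc : ∀ j, ∃ i, w i j ≠ 0 := fun j => (hcol j).exists
  have hr : ∀ i, ∃ j, w i j ≠ 0 := fun i => (hrow i).exists
  choose σ0 hσ0 using hc
  choose ρ hρ using hr
  have hcu : ∀ j i, w i j ≠ 0 → i = σ0 j := fun j i hi => (hcol j).unique hi (hσ0 j)
  have hru : ∀ i j, w i j ≠ 0 → j = ρ i := fun i j hj => (hrow i).unique hj (hρ i)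
  have hlr : ∀ j, ρ (σ0 j) = j := fun j => (hru (σ0 j) j (hσ0 j)).symm
  have hrl : ∀ i, σ0 (ρ i) = i := fun i => (hcu (ρ i) i (hρ i)).symm
  set σ : Equiv.Perm (Fin n) := ⟨σ0, ρ, hlr, hrl⟩ with hσ
  have hk : ∀ j, ∃ k < e, zeta e ^ k = w (σ0 j) j := by
    intro j
    haveI : NeZero e := ⟨by omega⟩
    exact (hprim he).eq_pow_of_pow_eq_one (hroot _ _ (hσ0 j))
  choose k hke hkw using hk
  set a : Fin n → ZMod e := fun j => ((k j : ℕ) : ZMod e) with ha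
  have hwm : w = Mm e n a σ := by
    ext i j
    simp only [Mm, Matrix.of_apply]
    by_cases hh : i = σ j
    · rw [if_pos hh]
      have : i = σ0 j := hh
      rw [this, ha, chi_natCast he, hkw j]
    · rw [if_neg hh]
      by_contra hne
      exact hh (hcu j i hne)
  refine ⟨a, σ, ?_, hwm⟩
  rw [hwm] at hprodw
  rw [prod_entries he] at hprodw
  have : chi e (∑ r, a r) = chi e 0 := by rw [hprodw, chi_zero he]
  exact chi_inj he this

lemma lam_eq (he : 2 ≤ e) (hn : 2 ≤ n) : lam e n = Mm e n (lamA e n) 1 := by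
  ext i j
  simp only [lam, Mm, lamA, Matrix.diagonal_apply, Matrix.of_apply, Equiv.Perm.one_apply]
  by_cases h : i = j
  · subst h
    rw [if_pos rfl]; refine Eq.trans ?_ (if_pos rfl).symm
    by_cases h0 : (i : ℕ) = 0
    · rw [if_pos h0, if_pos h0, chi_intCast he]
    · rw [if_neg h0, if_neg h0, chi_one he]
  · rw [if_neg h]; exact (if_neg h).symm

lemma lamA_sum (he : 2 ≤ e) (hn : 2 ≤ n) : ∑ r, lamA e n r = 0 := by
  classical
  haveI : NeZero n := ⟨by omega⟩
  have h0 : ((0 : Fin n) : ℕ) = 0 := rfl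
  rw [← Finset.add_sum_erase _ _ (Finset.mem_univ (0 : Fin n))]
  have h1 : ∀ i ∈ Finset.univ.erase (0 : Fin n), lamA e n i = 1 := by
    intro i hi
    have : i ≠ 0 := (Finset.mem_erase.mp hi).1
    have hv : (i : ℕ) ≠ 0 := fun hh => this (Fin.ext hh)
    simp [lamA, hv]
  rw [Finset.sum_congr rfl h1, Finset.sum_const, Finset.card_erase_of_mem (Finset.mem_univ _),
    Finset.card_univ, Fintype.card_fin]
  simp only [lamA, h0, if_pos]
  have hc : ((n - 1 : ℕ) : ZMod e) = ((n - 1 : ℤ) : ZMod e) := by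
    push_cast [Nat.cast_sub (by omega : 1 ≤ n)]
    ring
  rw [nsmul_eq_mul, mul_one, hc]
  push_cast
  ring


lemma mkeq {m a b : ℕ} (ha : a < m) (hb : b < m) (h : a = b) :
    (⟨a, ha⟩ : Fin m) = ⟨b, hb⟩ := Fin.ext h

lemma tv_zero : tv e n (0 : ZMod e) = 0 := by
  funext r; simp [tv]

lemma plain_mem (he : 2 ≤ e) (hn : 2 ≤ n) (q : ℕ) (hq : q + 1 < n) :
    Mm e n 0 (sw n q hq) ∈ Xset e n := by
  cases q with
  | zero => have := T_mem he hn (0 : ZMod e); rwa [tv_zero] at this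
  | succ k => exact S_mem he (k + 1) (by omega) hq

lemma sum_comp_perm (a : Fin n → ZMod e) (τ : Equiv.Perm (Fin n)) :
    ∑ r, (a ∘ τ) r = ∑ r, a r := Equiv.sum_comp τ a

lemma sum_tv (he : 2 ≤ e) (hn : 2 ≤ n) (i : ZMod e) : ∑ r, tv e n i r = 0 := by
  classical
  have h01 : (0 : ℕ) + 1 < n := by omega
  have hsub : ({⟨0, by omega⟩, ⟨1, by omega⟩} : Finset (Fin n)) ⊆ Finset.univ :=
    Finset.subset_univ _
  have hzero : ∀ r ∈ Finset.univ, r ∉ ({⟨0, by omega⟩, ⟨1, by omega⟩} : Finset (Fin n)) →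
      tv e n i r = 0 := by
    intro r _ hr
    have h0 : (r : ℕ) ≠ 0 := fun hh => hr (by simp [Finset.mem_insert, Fin.ext_iff, hh])
    have h1 : (r : ℕ) ≠ 1 := fun hh => hr (by simp [Finset.mem_insert, Fin.ext_iff, hh])
    simp [tv, h0, h1]
  rw [← Finset.sum_subset hsub hzero, Finset.sum_pair (by simp [Fin.ext_iff])]
  simp [tv]

/-- `(a,σ)` is supported on positions `< m`. -/
def Supported (m : ℕ) (a : Fin n → ZMod e) (σ : Equiv.Perm (Fin n)) : Prop :=
  ∀ i : Fin n, m ≤ (i : ℕ) → σ i = i ∧ a i = 0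

lemma mul_plain (he : 2 ≤ e) (a : Fin n → ZMod e) (σ : Equiv.Perm (Fin n))
    (q : ℕ) (hq : q + 1 < n) :
    Mm e n a σ * Mm e n 0 (sw n q hq) = Mm e n (a ∘ (sw n q hq)) (σ * sw n q hq) := by
  rw [Mm_mul _ _ _ _ he]
  congr 1
  funext r; simp


lemma sw_val_left {p : ℕ} (h : p + 1 < n) {i j : Fin n} (hi : (i : ℕ) = p)
    (hj : (j : ℕ) = p + 1) : sw n p h i = j := by
  have h1 : i = ⟨p, by omega⟩ := Fin.ext hi
  rw [h1, sw_apply_left h]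
  exact Fin.ext hj.symm

lemma sw_val_right {p : ℕ} (h : p + 1 < n) {i j : Fin n} (hi : (i : ℕ) = p + 1)
    (hj : (j : ℕ) = p) : sw n p h i = j := by
  have h1 : i = ⟨p + 1, h⟩ := Fin.ext hi
  rw [h1, sw_apply_right h]
  exact Fin.ext hj.symm

lemma tv_val0 (i : ZMod e) {r : Fin n} (hr : (r : ℕ) = 0) : tv e n i r = i := by
  simp [tv, hr]

lemma tv_val1 (i : ZMod e) {r : Fin n} (hr : (r : ℕ) = 1) : tv e n i r = -i := by
  simp [tv, hr]

lemma tv_val_other (i : ZMod e) {r : Fin n} (h0 : (r : ℕ) ≠ 0) (h1 : (r : ℕ) ≠ 1) :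
    tv e n i r = 0 := by
  simp [tv, h0, h1]

lemma Rmove (he : 2 ≤ e) (hn : 2 ≤ n) :
    ∀ (d q : ℕ) (h : q + d < n) (a : Fin n → ZMod e) (σ : Equiv.Perm (Fin n)),
    ∃ (l : List (Matrix (Fin n) (Fin n) ℂ)) (a' : Fin n → ZMod e) (σ' : Equiv.Perm (Fin n)),
      (∀ x ∈ l, x ∈ Xset e n) ∧ l.length = d ∧
      Mm e n a σ * l.prod = Mm e n a' σ' ∧
      (∀ i j : Fin n, (i : ℕ) = q + d → (j : ℕ) = q → σ' i = σ j ∧ a' i = a j) ∧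
      (∀ i : Fin n, ((i : ℕ) < q ∨ q + d < (i : ℕ)) → σ' i = σ i ∧ a' i = a i) ∧
      (∑ r, a' r = ∑ r, a r) := by
  intro d
  induction d with
  | zero =>
    intro q h a σ
    refine ⟨[], a, σ, by simp, rfl, by simp, ?_, fun i _ => ⟨rfl, rfl⟩, rfl⟩
    intro i j hi hj
    have : i = j := Fin.ext (by omega)
    subst this
    exact ⟨rfl, rfl⟩
  | succ d ih =>
    intro q h a σ
    have hq1 : q + 1 < n := by omega
    obtain ⟨l', a', σ', hmem, hlen, heq, hend, hout, hsum⟩ :=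
      ih (q + 1) (by omega) (a ∘ (sw n q hq1)) (σ * sw n q hq1)
    refine ⟨Mm e n 0 (sw n q hq1) :: l', a', σ', ?_, ?_, ?_, ?_, ?_, ?_⟩
    · intro x hx
      rcases List.mem_cons.mp hx with rfl | hx
      · exact plain_mem he hn q hq1
      · exact hmem x hx
    · simp [hlen]
    · rw [List.prod_cons, ← mul_assoc, mul_plain he a σ q hq1, heq]
    · intro i j hi hj
      have hmid : ((⟨q + 1, hq1⟩ : Fin n) : ℕ) = q + 1 := rfl
      obtain ⟨h1, h2⟩ := hend i ⟨q + 1, hq1⟩ (by omega) hmid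
      have hswap : sw n q hq1 ⟨q + 1, hq1⟩ = j := sw_val_right hq1 hmid hj
      constructor
      · rw [h1]
        show σ (sw n q hq1 ⟨q + 1, hq1⟩) = σ j
        rw [hswap]
      · rw [h2]
        show a (sw n q hq1 ⟨q + 1, hq1⟩) = a j
        rw [hswap]
    · intro i hi
      have h1 := hout i (by omega)
      have hτi : sw n q hq1 i = i := by
        apply sw_apply_ne hq1 <;> omega
      constructor
      · rw [h1.1]
        show σ (sw n q hq1 i) = σ i
        rw [hτi]
      · rw [h1.2]
        show a (sw n q hq1 i) = a i
        rw [hτi]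
    · rw [hsum, sum_comp_perm]

lemma mul_charge (he : 2 ≤ e) (hn : 2 ≤ n) (a : Fin n → ZMod e) (σ : Equiv.Perm (Fin n))
    (i : ZMod e) (h01 : (0 : ℕ) + 1 < n) :
    Mm e n a σ * Mm e n (tv e n i) (sw n 0 h01) =
      Mm e n (a ∘ (sw n 0 h01) + tv e n i) (σ * sw n 0 h01) := by
  rw [Mm_mul _ _ _ _ he]

lemma Lmove (he : 2 ≤ e) (hn : 2 ≤ n) :
    ∀ (k : ℕ) (hk1 : 1 ≤ k) (hkn : k < n) (a : Fin n → ZMod e) (σ : Equiv.Perm (Fin n)),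
    ∃ (l : List (Matrix (Fin n) (Fin n) ℂ)) (a' : Fin n → ZMod e) (σ' : Equiv.Perm (Fin n)),
      (∀ x ∈ l, x ∈ Xset e n) ∧ l.length = k ∧
      Mm e n a σ * l.prod = Mm e n a' σ' ∧
      (∀ i j : Fin n, (i : ℕ) = 0 → (j : ℕ) = k → σ' i = σ j) ∧
      (∀ i : Fin n, (i : ℕ) = 0 → a' i = 0) ∧
      (∀ i : Fin n, k < (i : ℕ) → σ' i = σ i ∧ a' i = a i) ∧
      (∑ r, a' r = ∑ r, a r) := by
  intro k
  induction k with
  | zero => intro hk1; omega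
  | succ k ih =>
    intro hk1 hkn a σ
    by_cases hk0 : k = 0
    · -- base : single charge letter
      subst hk0
      have h01 : (0 : ℕ) + 1 < n := by omega
      set i0 : ZMod e := -(a ⟨1, by omega⟩) with hi0
      refine ⟨[Mm e n (tv e n i0) (sw n 0 h01)], a ∘ (sw n 0 h01) + tv e n i0,
        σ * sw n 0 h01, ?_, rfl, ?_, ?_, ?_, ?_, ?_⟩
      · intro x hx
        rcases List.mem_cons.mp hx with rfl | hx
        · exact T_mem he hn i0
        · simp at hx
      · rw [List.prod_singleton, mul_charge he hn a σ i0 h01]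
      · intro i j hi hj
        show σ (sw n 0 h01 i) = σ j
        rw [sw_val_left h01 hi hj]
      · intro i hi
        show a (sw n 0 h01 i) + tv e n i0 i = 0
        have h1 : sw n 0 h01 i = ⟨1, by omega⟩ := sw_val_left h01 hi rfl
        rw [h1, tv_val0 i0 hi, hi0]
        ring
      · intro i hi
        have hτi : sw n 0 h01 i = i := by apply sw_apply_ne h01 <;> omega
        have htvi : tv e n i0 i = 0 := tv_val_other i0 (by omega) (by omega)
        constructor
        · show σ (sw n 0 h01 i) = σ i
          rw [hτi]
        · show a (sw n 0 h01 i) + tv e n i0 i = a i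
          rw [hτi, htvi, add_zero]
      · simp only [Pi.add_apply]
        rw [Finset.sum_add_distrib, sum_comp_perm, sum_tv he hn, add_zero]
    · -- step : plain swap at (k, k+1) then induction
      have hq1 : k + 1 < n := hkn
      obtain ⟨l', a', σ', hmem, hlen, heq, hend1, hend2, hout, hsum⟩ :=
        ih (by omega) (by omega) (a ∘ (sw n k hq1)) (σ * sw n k hq1)
      refine ⟨Mm e n 0 (sw n k hq1) :: l', a', σ', ?_, by simp [hlen], ?_, ?_, hend2, ?_, ?_⟩
      · intro x hx
        rcases List.mem_cons.mp hx with rfl | hx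
        · exact plain_mem he hn k hq1
        · exact hmem x hx
      · rw [List.prod_cons, ← mul_assoc, mul_plain he a σ k hq1, heq]
      · intro i j hi hj
        have hmid : ((⟨k, by omega⟩ : Fin n) : ℕ) = k := rfl
        rw [hend1 i ⟨k, by omega⟩ hi hmid]
        show σ (sw n k hq1 ⟨k, by omega⟩) = σ j
        rw [sw_val_left hq1 hmid hj]
      · intro i hi
        obtain ⟨h1, h2⟩ := hout i (by omega)
        have hτi : sw n k hq1 i = i := by apply sw_apply_ne hq1 <;> omega
        constructor
        · rw [h1]
          show σ (sw n k hq1 i) = σ i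
          rw [hτi]
        · rw [h2]
          show a (sw n k hq1 i) = a i
          rw [hτi]
      · rw [hsum, sum_comp_perm]

lemma stage (he : 2 ≤ e) (hn : 2 ≤ n) (m : ℕ) (hm2 : 2 ≤ m) (hmn : m ≤ n)
    (a : Fin n → ZMod e) (σ : Equiv.Perm (Fin n)) (hsup : Supported m a σ) :
    ∃ (l : List (Matrix (Fin n) (Fin n) ℂ)) (a' : Fin n → ZMod e) (σ' : Equiv.Perm (Fin n)),
      (∀ x ∈ l, x ∈ Xset e n) ∧ l.length ≤ 2 * (m - 1) ∧
      Mm e n a σ * l.prod = Mm e n a' σ' ∧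
      Supported (m - 1) a' σ' ∧ (∑ r, a' r = ∑ r, a r) := by
  classical
  set v : Fin n := ⟨m - 1, by omega⟩ with hv
  have hvval : (v : ℕ) = m - 1 := rfl
  set p : Fin n := σ⁻¹ v with hp
  have hσp : σ p = v := Equiv.apply_symm_apply σ v
  have hpm : (p : ℕ) < m := by
    by_contra hge
    have h1 := (hsup p (by omega)).1
    have h2 : p = v := by rw [← hσp, h1]
    have h3 := congrArg Fin.val h2
    omega
  by_cases hap : a p = 0
  · -- item uncharged : move right from p to m-1
    obtain ⟨l, a', σ', hmem, hlen, heq, hend, hout, hsum⟩ :=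
      Rmove he hn ((m - 1) - (p : ℕ)) (p : ℕ) (by omega) a σ
    refine ⟨l, a', σ', hmem, by omega, heq, ?_, hsum⟩
    intro i hi
    by_cases him : (i : ℕ) = m - 1
    · obtain ⟨h1, h2⟩ := hend i p (by omega) rfl
      refine ⟨?_, ?_⟩
      · rw [h1, hσp]
        exact Fin.ext (by omega)
      · rw [h2, hap]
    · have hiup := hout i (by omega)
      have hs := hsup i (by omega)
      exact ⟨by rw [hiup.1, hs.1], by rw [hiup.2, hs.2]⟩
  · by_cases hp0 : (p : ℕ) = 0
    · -- charged item at position 0 : one charge letter, then move right from 1 to m-1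
      have h01 : (0 : ℕ) + 1 < n := by omega
      obtain ⟨l, a', σ', hmem, hlen, heq, hend, hout, hsum⟩ :=
        Rmove he hn (m - 2) 1 (by omega) (a ∘ (sw n 0 h01) + tv e n (a p)) (σ * sw n 0 h01)
      refine ⟨Mm e n (tv e n (a p)) (sw n 0 h01) :: l, a', σ', ?_, ?_, ?_, ?_, ?_⟩
      · intro x hx
        rcases List.mem_cons.mp hx with rfl | hx
        · exact T_mem he hn (a p)
        · exact hmem x hx
      · simp only [List.length_cons, hlen]
        omega
      · rw [List.prod_cons, ← mul_assoc, mul_charge he hn a σ (a p) h01, heq]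
      · intro i hi
        by_cases him : (i : ℕ) = m - 1
        · obtain ⟨h1, h2⟩ := hend i ⟨1, by omega⟩ (by omega) rfl
          have hsw : sw n 0 h01 (⟨1, by omega⟩ : Fin n) = p := sw_val_right h01 rfl hp0
          refine ⟨?_, ?_⟩
          · rw [h1]
            show σ (sw n 0 h01 ⟨1, by omega⟩) = i
            rw [hsw, hσp]
            exact Fin.ext (by omega)
          · rw [h2]
            show a (sw n 0 h01 ⟨1, by omega⟩) + tv e n (a p) ⟨1, by omega⟩ = 0
            rw [hsw, tv_val1 (a p) rfl]
            ring
        · obtain ⟨h1, h2⟩ := hout i (by omega)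
          have hs := hsup i (by omega)
          have hτi : sw n 0 h01 i = i := by apply sw_apply_ne h01 <;> omega
          have htvi : tv e n (a p) i = 0 := tv_val_other (a p) (by omega) (by omega)
          refine ⟨?_, ?_⟩
          · rw [h1]
            show σ (sw n 0 h01 i) = i
            rw [hτi, hs.1]
          · rw [h2]
            show a (sw n 0 h01 i) + tv e n (a p) i = 0
            rw [hτi, htvi, hs.2, add_zero]
      · rw [hsum]
        simp only [Pi.add_apply]
        rw [Finset.sum_add_distrib, sum_comp_perm, sum_tv he hn, add_zero]
    · -- charged item at position p ≥ 1 : move left discharging, then right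
      obtain ⟨l1, a1, σ1, hmem1, hlen1, heq1, hend11, hend12, hout1, hsum1⟩ :=
        Lmove he hn (p : ℕ) (by omega) (by omega) a σ
      obtain ⟨l2, a', σ', hmem2, hlen2, heq2, hend2, hout2, hsum2⟩ :=
        Rmove he hn (m - 1) 0 (by omega) a1 σ1
      refine ⟨l1 ++ l2, a', σ', ?_, ?_, ?_, ?_, ?_⟩
      · intro x hx
        rcases List.mem_append.mp hx with hx | hx
        · exact hmem1 x hx
        · exact hmem2 x hx
      · rw [List.length_append, hlen1, hlen2]; omega
      · rw [List.prod_append, ← mul_assoc, heq1, heq2]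
      · intro i hi
        by_cases him : (i : ℕ) = m - 1
        · obtain ⟨h1, h2⟩ := hend2 i ⟨0, by omega⟩ (by omega) rfl
          refine ⟨?_, ?_⟩
          · rw [h1, hend11 ⟨0, by omega⟩ p rfl rfl, hσp]
            exact Fin.ext (by omega)
          · rw [h2, hend12 ⟨0, by omega⟩ rfl]
        · have hiup2 := hout2 i (by omega)
          have hiup1 := hout1 i (by omega)
          have hs := hsup i (by omega)
          exact ⟨by rw [hiup2.1, hiup1.1, hs.1], by rw [hiup2.2, hiup1.2, hs.2]⟩
      · rw [hsum2, hsum1]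

lemma prod_mul_reverse (he : 2 ≤ e) (hn : 2 ≤ n) :
    ∀ (l : List (Matrix (Fin n) (Fin n) ℂ)), (∀ x ∈ l, x ∈ Xset e n) →
      l.prod * l.reverse.prod = 1 := by
  intro l
  induction l with
  | nil => simp
  | cons x t ih =>
    intro hmem
    rw [List.prod_cons, List.reverse_cons, List.prod_append, List.prod_singleton]
    have h1 := ih (fun y hy => hmem y (List.mem_cons_of_mem _ hy))
    have h2 := letter_sq he (letter_of_mem he hn (hmem x (List.mem_cons_self (a := x) (l := t))))
    calc x * t.prod * (t.reverse.prod * x)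
        = x * (t.prod * t.reverse.prod) * x := by
          rw [mul_assoc x t.prod _, ← mul_assoc t.prod _ _, ← mul_assoc]
      _ = 1 := by rw [h1, mul_one, h2]

lemma upper (he : 2 ≤ e) (hn : 2 ≤ n) :
    ∀ (m : ℕ), m ≤ n → ∀ (a : Fin n → ZMod e) (σ : Equiv.Perm (Fin n)),
      Supported m a σ → (∑ r, a r) = 0 →
      ∃ l : List (Matrix (Fin n) (Fin n) ℂ),
        (∀ x ∈ l, x ∈ Xset e n) ∧ l.length ≤ m * (m - 1) ∧ l.prod = Mm e n a σ := by
  intro m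
  induction m with
  | zero =>
    intro _ a σ hsup _
    have hσ : σ = 1 := Equiv.ext fun i => (hsup i (by omega)).1
    have ha : a = 0 := funext fun i => (hsup i (by omega)).2
    exact ⟨[], by simp, by simp, by rw [List.prod_nil, hσ, ha, Mm_one he]⟩
  | succ m ih =>
    intro hm a σ hsup hsum
    by_cases hm0 : m = 0
    · subst hm0
      have hσ : σ = 1 := by
        apply Equiv.ext
        intro i
        by_cases hi : 1 ≤ (i : ℕ)
        · rw [(hsup i hi).1]; rfl
        · rw [Equiv.Perm.one_apply]
          by_contra hne
          have hxv : 1 ≤ ((σ i : Fin n) : ℕ) := by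
            by_contra hx0
            exact hne (Fin.ext (by omega))
          have hfix := (hsup (σ i) hxv).1
          exact hne (σ.injective hfix)
      have hsum0 : ∑ r, a r = a ⟨0, by omega⟩ := by
        rw [← Finset.add_sum_erase _ _ (Finset.mem_univ (⟨0, by omega⟩ : Fin n))]
        rw [Finset.sum_eq_zero, add_zero]
        intro i hi
        have hine : i ≠ ⟨0, by omega⟩ := (Finset.mem_erase.mp hi).1
        have hv : 1 ≤ (i : ℕ) := by
          by_contra h0
          exact hine (Fin.ext (by omega : (i : ℕ) = (0 : ℕ)))
        exact (hsup i hv).2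
      have ha : a = 0 := by
        funext i
        by_cases hi : 1 ≤ (i : ℕ)
        · exact (hsup i hi).2
        · have hi0 : i = ⟨0, by omega⟩ := Fin.ext (by omega : (i : ℕ) = (0 : ℕ))
          rw [hi0]
          rw [hsum0] at hsum
          exact hsum
      exact ⟨[], by simp, by simp, by rw [List.prod_nil, hσ, ha, Mm_one he]⟩
    · obtain ⟨w1, a', σ', hmem1, hlen1, heq, hsup', hsum'⟩ :=
        stage he hn (m + 1) (by omega) hm a σ hsup
      obtain ⟨l', hmem2, hlen2, hprod2⟩ := ih (by omega) a' σ' hsup' (by rw [hsum', hsum])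
      refine ⟨l' ++ w1.reverse, ?_, ?_, ?_⟩
      · intro x hx
        rcases List.mem_append.mp hx with hx | hx
        · exact hmem2 x hx
        · exact hmem1 x (List.mem_reverse.mp hx)
      · rw [List.length_append, List.length_reverse]
        have hb : m * (m - 1) + 2 * m = (m + 1) * m := by
          cases m with
          | zero => simp
          | succ k =>
            simp only [Nat.succ_sub_one]
            ring
        simp only [Nat.succ_sub_one] at *
        omega
      · rw [List.prod_append, hprod2]
        calc Mm e n a' σ' * w1.reverse.prod
            = (Mm e n a σ * w1.prod) * w1.reverse.prod := by rw [heq]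
          _ = Mm e n a σ * (w1.prod * w1.reverse.prod) := by rw [mul_assoc]
          _ = Mm e n a σ := by rw [prod_mul_reverse he hn w1 hmem1, mul_one]

end S6

/-- the maximal length over `X` of an element of `G(e,e,n)` is `n(n-1)`. -/
theorem statement_6 (e n : ℕ) (he : 2 ≤ e) (hn : 2 ≤ n) :
    IsGreatest (len e n '' {w | IsGeen e n w}) (n * (n - 1)) := by
  constructor
  · -- the element λ attains the maximum
    have hgeen : IsGeen e n (lam e n) := by
      rw [S6.lam_eq he hn]
      exact S6.geen_of_model he _ _ (S6.lamA_sum he hn)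
    refine ⟨lam e n, hgeen, ?_⟩
    have hsupp : S6.Supported n (S6.lamA e n) 1 := fun i hi => absurd i.isLt (by omega)
    obtain ⟨l, hmem, hlen, hprod⟩ :=
      S6.upper he hn n le_rfl (S6.lamA e n) 1 hsupp (S6.lamA_sum he hn)
    have hmemS : l.length ∈ {r | ∃ l' : List (Matrix (Fin n) (Fin n) ℂ),
        (∀ x ∈ l', x ∈ Xset e n) ∧ l'.length = r ∧ l'.prod = lam e n} :=
      ⟨l, hmem, rfl, by rw [hprod, ← S6.lam_eq he hn]⟩
    have hub : len e n (lam e n) ≤ n * (n - 1) :=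
      le_trans (Nat.sInf_le hmemS) hlen
    have hlb : n * (n - 1) ≤ len e n (lam e n) := by
      apply le_csInf ⟨l.length, hmemS⟩
      rintro r ⟨l', hmem', hlen', hprod'⟩
      have := S6.lower_bound he hn l' hmem' (by rw [hprod', S6.lam_eq he hn])
      omega
    omega
  · rintro r ⟨w, hw, rfl⟩
    obtain ⟨a, σ, hsum, rfl⟩ := S6.geen_to_model he hw
    have hsupp : S6.Supported n a σ := fun i hi => absurd i.isLt (by omega)
    obtain ⟨l, hmem, hlen, hprod⟩ := S6.upper he hn n le_rfl a σ hsupp hsum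
    exact le_trans (Nat.sInf_le ⟨l, hmem, rfl, hprod⟩) hlen
end

section
/- The element λ = diag(ζ_e^{-(n-1)}, ζ_e, ζ_e, ..., ζ_e) ∈ G(e,e,n) has length n(n-1) over X, namely the maximal length, and the word (t_1 t_0)(s_3 t_1 t_0 s_3)···(s_n···s_3 t_1 t_0 s_3···s_n) is a reduced expression of λ. -/
open Matrix Complex
open scoped Classical

/-- The block `s_i ⋯ s_3 t_1 t_0 s_3 ⋯ s_i` (for `i ≥ 2`; for `i = 2` it is `t_1 t_0`). -/
noncomputable def lamBlock (e n : ℕ) (i : ℕ) : List (Matrix (Fin n) (Fin n) ℂ) :=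
  ((List.range (i - 2)).reverse.map fun m => smat n (m + 3)) ++
    [tmat e n 1, tmat e n 0] ++ ((List.range (i - 2)).map fun m => smat n (m + 3))

/-- The word `(t_1 t_0)(s_3 t_1 t_0 s_3) ⋯ (s_n ⋯ s_3 t_1 t_0 s_3 ⋯ s_n)`. -/
noncomputable def lamWord (e n : ℕ) : List (Matrix (Fin n) (Fin n) ℂ) :=
  ((List.range (n - 1)).map fun m => lamBlock e n (m + 2)).flatten

def swf (n m : ℕ) (a : Fin n) : Fin n :=
  if h : m + 1 < n then
    (if (a : ℕ) = m then ⟨m + 1, h⟩ else if (a : ℕ) = m + 1 then ⟨m, by omega⟩ else a)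
  else a
lemma swf_coe {n : ℕ} (m : ℕ) (h : m + 1 < n) (a : Fin n) :
    ((swf n m a : ℕ)) = if (a : ℕ) = m then m + 1 else if (a : ℕ) = m + 1 then m else a := by
  unfold swf; rw [dif_pos h]; split_ifs <;> rfl
lemma swf_invol {n : ℕ} (m : ℕ) (a : Fin n) : swf n m (swf n m a) = a := by
  unfold swf; split_ifs <;> (try rfl) <;> (apply Fin.ext; simp_all)
lemma swf_inj {n : ℕ} (m : ℕ) : Function.Injective (swf n m) := by
  intro a b hab
  have := congrArg (swf n m) hab
  rwa [swf_invol, swf_invol] at this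
noncomputable def tok (n : ℕ) (T : Fin n → Fin n) (q : Fin n → ℂ) : Matrix (Fin n) (Fin n) ℂ :=
  Matrix.of fun a b => if T b = a then q b else 0
lemma tok_id_one (n : ℕ) : tok n id (fun _ => 1) = 1 := by
  ext a b; simp [tok, Matrix.one_apply, eq_comm]
lemma smat_row {n : ℕ} (j : ℕ) (h3 : 3 ≤ j) (hj : j ≤ n) (a c : Fin n) :
    smat n j a c = if c = swf n (j - 2) a then 1 else 0 := by
  have h1 : (j - 2) + 1 = j - 1 := by omega
  have h2 : (j - 2) + 1 < n := by omega
  unfold smat swf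
  rw [dif_pos h2]
  simp only [Matrix.of_apply]
  split_ifs <;> first | rfl | (exfalso; simp_all [Fin.ext_iff] <;> omega)

lemma tmat_row {e n : ℕ} (i : ℤ) (hn : 2 ≤ n) (a c : Fin n) :
    tmat e n i a c =
      (if (a : ℕ) = 0 then zeta e ^ (-i) else if (a : ℕ) = 1 then zeta e ^ i else 1) *
        (if c = swf n 0 a then 1 else 0) := by
  have h2 : 0 + 1 < n := by omega
  unfold tmat swf
  rw [dif_pos h2]
  simp only [Matrix.of_apply]
  split_ifs <;> first | rfl | ring1 | (exfalso; simp_all [Fin.ext_iff] <;> omega)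

lemma smat_mul_tok {n : ℕ} (j : ℕ) (h3 : 3 ≤ j) (hj : j ≤ n) (T : Fin n → Fin n) (q : Fin n → ℂ) :
    smat n j * tok n T q = tok n (fun t => swf n (j - 2) (T t)) q := by
  ext a b
  rw [Matrix.mul_apply]
  have : ∀ c, smat n j a c * tok n T q c b =
      if c = swf n (j - 2) a then tok n T q c b else 0 := by
    intro c; rw [smat_row j h3 hj]; split_ifs <;> simp
  rw [Finset.sum_congr rfl (fun c _ => this c), Finset.sum_ite_eq' Finset.univ]
  simp only [Finset.mem_univ, if_true, tok, Matrix.of_apply]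
  by_cases h : T b = swf n (j - 2) a
  · have h2 : swf n (j-2) (T b) = a := by rw [h, swf_invol]
    rw [if_pos h, if_pos h2]
  · have h' : swf n (j-2) (T b) ≠ a := by
      intro hc; apply h; rw [← hc, swf_invol]
    rw [if_neg h, if_neg h']

lemma tmat_mul_tok {e n : ℕ} (i : ℤ) (hn : 2 ≤ n) (T : Fin n → Fin n) (q : Fin n → ℂ) :
    tmat e n i * tok n T q = tok n (fun t => swf n 0 (T t))
      (fun t => (if (T t : ℕ) = 1 then zeta e ^ (-i) else if (T t : ℕ) = 0 then zeta e ^ i else 1) * q t) := by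
  have h2 : 0 + 1 < n := by omega
  ext a b
  rw [Matrix.mul_apply]
  have : ∀ c, tmat e n i a c * tok n T q c b =
      if c = swf n 0 a then
        (if (a : ℕ) = 0 then zeta e ^ (-i) else if (a : ℕ) = 1 then zeta e ^ i else 1) * tok n T q c b
      else 0 := by
    intro c; rw [tmat_row i hn]; split_ifs <;> ring
  rw [Finset.sum_congr rfl (fun c _ => this c), Finset.sum_ite_eq' Finset.univ]
  simp only [Finset.mem_univ, if_true, tok, Matrix.of_apply]
  by_cases h : T b = swf n 0 a
  · have hswap : swf n 0 (T b) = a := by rw [h, swf_invol]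
    rw [if_pos h, if_pos hswap]
    -- match phases
    have hco : (T b : ℕ) = (swf n 0 a : ℕ) := by rw [h]
    rw [swf_coe 0 h2] at hco
    by_cases ha0 : (a : ℕ) = 0
    · have : (T b : ℕ) = 1 := by simpa [ha0] using hco
      simp [ha0, this]
    · by_cases ha1 : (a : ℕ) = 1
      · have : (T b : ℕ) = 0 := by simpa [ha0, ha1] using hco
        simp [ha0, ha1, this, mul_comm]
      · have hb : (T b : ℕ) = (a : ℕ) := by simpa [ha0, ha1] using hco
        have hb1 : (T b : ℕ) ≠ 1 := by omega
        have hb0 : (T b : ℕ) ≠ 0 := by omega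
        simp [ha0, ha1, hb1, hb0]
  · have h' : swf n 0 (T b) ≠ a := by
      intro hc; apply h; rw [← hc, swf_invol]
    rw [if_neg h, if_neg h', mul_zero]

lemma tok_mul_smat {n : ℕ} (j : ℕ) (h3 : 3 ≤ j) (hj : j ≤ n) (T : Fin n → Fin n) (q : Fin n → ℂ) :
    tok n T q * smat n j = tok n (fun t => T (swf n (j - 2) t)) (fun t => q (swf n (j - 2) t)) := by
  ext a b
  rw [Matrix.mul_apply]
  have hsym : ∀ c, smat n j c b = if c = swf n (j - 2) b then 1 else 0 := by
    intro c
    rw [smat_row j h3 hj]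
    by_cases h : b = swf n (j-2) c
    · rw [if_pos h, if_pos (by rw [h, swf_invol])]
    · rw [if_neg h, if_neg (by intro hc; apply h; rw [hc, swf_invol])]
  have : ∀ c, tok n T q a c * smat n j c b =
      if c = swf n (j - 2) b then tok n T q a c else 0 := by
    intro c; rw [hsym]; split_ifs <;> simp
  rw [Finset.sum_congr rfl (fun c _ => this c), Finset.sum_ite_eq' Finset.univ]
  simp [tok]

lemma zeta_ne_zero (e : ℕ) : zeta e ≠ 0 := Complex.exp_ne_zero _

lemma zeta_ne_one {e : ℕ} (he : 2 ≤ e) : zeta e ≠ 1 := by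
  intro h
  rw [zeta, Complex.exp_eq_one_iff] at h
  obtain ⟨k, hk⟩ := h
  have he0 : (e : ℂ) ≠ 0 := by
    simp only [ne_eq, Nat.cast_eq_zero]; omega
  have h2 : (2 * (Real.pi : ℂ) * Complex.I) ≠ 0 := by
    simp [Real.pi_ne_zero, Complex.I_ne_zero]
  have hmain : (1 : ℂ) * (2 * (Real.pi : ℂ) * Complex.I) =
      ((k : ℂ) * e) * (2 * (Real.pi : ℂ) * Complex.I) := by
    field_simp at hk
    ring_nf
    ring_nf at hk
    linear_combination (2 * (Real.pi : ℂ) * Complex.I) * hk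
  have h1 : (1 : ℂ) = (k : ℂ) * e := mul_right_cancel₀ h2 hmain
  have h1' : ((1 : ℤ) : ℂ) = (((k * (e : ℤ)) : ℤ) : ℂ) := by push_cast; linear_combination h1
  have h2' : (1 : ℤ) = k * (e : ℤ) := by exact_mod_cast h1'
  have hdvd : ((e : ℤ)) ∣ 1 := ⟨k, by rw [h2']; ring⟩
  have := Int.le_of_dvd one_pos hdvd
  omega


lemma tok_congr {n : ℕ} {T T' : Fin n → Fin n} {q q' : Fin n → ℂ}
    (hT : ∀ t, T t = T' t) (hq : ∀ t, q t = q' t) : tok n T q = tok n T' q' := by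
  have h1 : T = T' := funext hT
  have h2 : q = q' := funext hq
  rw [h1, h2]

lemma tok_id_mul_tok_id {n : ℕ} (p q : Fin n → ℂ) :
    tok n id p * tok n id q = tok n id (fun a => p a * q a) := by
  ext a b
  rw [Matrix.mul_apply]
  have : ∀ c, tok n id p a c * tok n id q c b =
      if c = a then p c * (if b = c then q b else 0) else 0 := by
    intro c
    simp only [tok, Matrix.of_apply, id]
    split_ifs <;> simp_all
  rw [Finset.sum_congr rfl (fun c _ => this c), Finset.sum_ite_eq' Finset.univ]
  simp only [Finset.mem_univ, if_true, tok, Matrix.of_apply, id]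
  by_cases h : b = a <;> simp [h]

/-- phase function of one block. -/
noncomputable def dphase (e n : ℕ) (k : ℕ) : Fin n → ℂ :=
  fun a => if (a : ℕ) = 0 then zeta e ^ (-1 : ℤ) else if (a : ℕ) = k + 1 then zeta e else 1

lemma lamBlock_succ (e n : ℕ) (k : ℕ) :
    lamBlock e n (k + 3) = smat n (k + 3) :: (lamBlock e n (k + 2) ++ [smat n (k + 3)]) := by
  have h1 : k + 3 - 2 = k + 1 := by omega
  have h2 : k + 2 - 2 = k := by omega
  simp [lamBlock, h1, h2, List.range_succ]

lemma blockProd {e n : ℕ} (hn : 2 ≤ n) :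
    ∀ k, k + 2 ≤ n → (lamBlock e n (k + 2)).prod = tok n id (dphase e n k) := by
  intro k
  induction k with
  | zero =>
    intro _
    have h2 : (0 : ℕ) + 1 < n := by omega
    have hb : lamBlock e n 2 = [tmat e n 1, tmat e n 0] := by simp [lamBlock]
    rw [hb]
    rw [show ([tmat e n 1, tmat e n 0] : List (Matrix (Fin n) (Fin n) ℂ)).prod
        = tmat e n 1 * (tmat e n 0 * tok n id (fun _ => 1)) by rw [tok_id_one]; simp]
    rw [tmat_mul_tok 0 hn, tmat_mul_tok 1 hn]
    apply tok_congr
    · intro t; simp only [id_eq]; rw [swf_invol]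
    · intro t
      simp only [id_eq]
      by_cases t0 : (t : ℕ) = 0
      · have hv : (swf n 0 t : ℕ) = 1 := by rw [swf_coe 0 h2]; simp [t0]
        simp [dphase, hv, t0]
      · by_cases t1 : (t : ℕ) = 1
        · have hv : (swf n 0 t : ℕ) = 0 := by rw [swf_coe 0 h2]; simp [t0, t1]
          simp [dphase, hv, t0, t1]
        · have hv : (swf n 0 t : ℕ) = (t : ℕ) := by rw [swf_coe 0 h2]; simp [t0, t1]
          simp [dphase, hv, t0, t1]
  | succ k ih =>
    intro hk
    have hk2 : k + 2 ≤ n := by omega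
    have h3 : 3 ≤ k + 3 := by omega
    have hjn : k + 3 ≤ n := by omega
    have hcoe : k + 3 - 2 = k + 1 := by omega
    have hlt : (k + 1) + 1 < n := by omega
    have : lamBlock e n (k + 1 + 2) = smat n (k + 3) :: (lamBlock e n (k + 2) ++ [smat n (k + 3)]) := by
      rw [show k + 1 + 2 = k + 3 by ring]; exact lamBlock_succ e n k
    rw [this, List.prod_cons, List.prod_append, List.prod_singleton, ih hk2,
      tok_mul_smat (k + 3) h3 hjn, smat_mul_tok (k + 3) h3 hjn]
    apply tok_congr
    · intro t; simp only [id_eq]; rw [swf_invol]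
    · intro t
      rw [hcoe]
      by_cases h1 : (t : ℕ) = k + 1
      · have hv : (swf n (k + 1) t : ℕ) = k + 2 := by rw [swf_coe (k + 1) hlt]; simp [h1]
        simp only [dphase, hv, h1]
        rw [if_neg (by omega), if_neg (by omega), if_neg (by omega), if_neg (by omega)]
      · by_cases h2 : (t : ℕ) = k + 2
        · have hv : (swf n (k + 1) t : ℕ) = k + 1 := by
            rw [swf_coe (k + 1) hlt]; simp [h1, h2]
          simp [dphase, hv, h2]
        · have hv : (swf n (k + 1) t : ℕ) = (t : ℕ) := by
            rw [swf_coe (k + 1) hlt]; simp [h1, h2]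
          simp only [dphase, hv]
          by_cases h0 : (t : ℕ) = 0
          · simp [h0]
          · rw [if_neg h0, if_neg (by omega), if_neg h0, if_neg (by omega)]

noncomputable def Dphase (e n : ℕ) (r : ℕ) : Fin n → ℂ :=
  fun a => if (a : ℕ) = 0 then zeta e ^ (-(r : ℤ)) else if (a : ℕ) ≤ r then zeta e else 1

lemma partialProd {e n : ℕ} (hn : 2 ≤ n) :
    ∀ r, r + 1 ≤ n →
      (((List.range r).map fun m => lamBlock e n (m + 2)).flatten).prod = tok n id (Dphase e n r) := by
  intro r
  induction r with
  | zero =>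
    intro _
    simp only [List.range_zero, List.map_nil, List.flatten_nil, List.prod_nil]
    rw [← tok_id_one n]
    apply tok_congr (fun t => rfl)
    intro t
    simp only [Dphase]
    split_ifs with h1 h2
    · simp
    · omega
    · rfl
  | succ r ih =>
    intro hr
    rw [List.range_succ, List.map_append, List.flatten_append, List.prod_append,
      ih (by omega)]
    simp only [List.map_cons, List.map_nil, List.flatten_cons, List.flatten_nil,
      List.append_nil]
    rw [blockProd hn r (by omega), tok_id_mul_tok_id]
    apply tok_congr (fun t => rfl)
    intro t
    simp only [Dphase, dphase]
    by_cases h0 : (t : ℕ) = 0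
    · rw [if_pos h0, if_pos h0, if_pos h0,
        show (-(((r + 1 : ℕ)) : ℤ)) = (-(r : ℤ)) + (-1 : ℤ) by push_cast; ring,
        zpow_add₀ (zeta_ne_zero e)]
    · rw [if_neg h0, if_neg h0, if_neg h0]
      by_cases hle : (t : ℕ) ≤ r
      · rw [if_pos hle, if_neg (by omega), if_pos (by omega), mul_one]
      · by_cases heq : (t : ℕ) = r + 1
        · rw [if_neg (by omega), if_pos heq, if_pos (by omega), one_mul]
        · rw [if_neg hle, if_neg (by omega), if_neg (by omega), one_mul]

lemma lamWord_prod {e n : ℕ} (hn : 2 ≤ n) : (lamWord e n).prod = lam e n := by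
  have h := partialProd (e := e) hn (n - 1) (by omega)
  rw [lamWord, h]
  ext a b
  simp only [tok, Matrix.of_apply, lam, Matrix.diagonal, Matrix.of_apply, id_eq]
  by_cases hab : b = a
  · subst hab
    rw [if_pos rfl, if_pos rfl]
    simp only [Dphase]
    by_cases h0 : (b : ℕ) = 0
    · rw [if_pos h0, if_pos h0]
      congr 1
      push_cast [Nat.cast_sub (by omega : 1 ≤ n)]
      ring
    · rw [if_neg h0, if_neg h0, if_pos (by omega : (b : ℕ) ≤ n - 1)]
  · rw [if_neg hab, if_neg (fun h => hab h.symm)]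

lemma lamBlock_length (e n m : ℕ) : (lamBlock e n (m + 2)).length = 2 * m + 2 := by
  simp [lamBlock]
  omega

lemma sum_range_len : ∀ R : ℕ, (((List.range R).map fun m => 2 * m + 2).sum) = R * (R + 1) := by
  intro R
  induction R with
  | zero => simp
  | succ R ih =>
    rw [List.range_succ, List.map_append, List.sum_append, ih]
    simp
    ring

lemma lamWord_length {e n : ℕ} (hn : 2 ≤ n) : (lamWord e n).length = n * (n - 1) := by
  rw [lamWord, List.length_flatten, List.map_map]
  have : (List.map (List.length ∘ fun m => lamBlock e n (m + 2)) (List.range (n - 1)))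
      = (List.range (n - 1)).map fun m => 2 * m + 2 := by
    apply List.map_congr_left
    intro m _
    exact lamBlock_length e n m
  rw [this, sum_range_len]
  have : n - 1 + 1 = n := by omega
  rw [this, Nat.mul_comm]

lemma lamWord_mem {e n : ℕ} (he : 2 ≤ e) (hn : 2 ≤ n) :
    ∀ x ∈ lamWord e n, x ∈ Xset e n := by
  intro x hx
  rw [lamWord, List.mem_flatten] at hx
  obtain ⟨bl, hbl, hxbl⟩ := hx
  rw [List.mem_map] at hbl
  obtain ⟨m, hm, rfl⟩ := hbl
  rw [List.mem_range] at hm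
  rw [lamBlock] at hxbl
  simp only [List.mem_append, List.mem_map, List.mem_reverse, List.mem_range,
    List.mem_cons, List.mem_singleton, List.not_mem_nil] at hxbl
  have hs : ∀ m' : ℕ, m' < m + 2 - 2 → x = smat n (m' + 3) → x ∈ Xset e n := by
    intro m' hm' hxe
    right
    have hb1 : 3 ≤ m' + 3 := by omega
    have hb2 : m' + 3 ≤ n := by clear hxe hxbl; omega
    exact ⟨m' + 3, hb1, hb2, hxe⟩
  rcases hxbl with (⟨m', hm', hxe⟩ | h) | ⟨m', hm', hxe⟩
  · exact hs m' hm' hxe.symm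
  · rcases h with h1 | h0 | hfalse
    · left; exact ⟨1, by omega, by rw [h1]; norm_num⟩
    · left; exact ⟨0, by omega, by rw [h0]; norm_num⟩
    · exact absurd hfalse (by simp)
  · exact hs m' hm' hxe.symm

def stepTf (n : ℕ) (mv : ℕ × ℤ) (T : Fin n → Fin n) : Fin n → Fin n :=
  fun t => swf n mv.1 (T t)

noncomputable def stepQf (e n : ℕ) (mv : ℕ × ℤ) (T : Fin n → Fin n) (q : Fin n → ℂ) :
    Fin n → ℂ :=
  fun t => (if mv.1 = 0 then
      (if (T t : ℕ) = 1 then zeta e ^ (-mv.2) else if (T t : ℕ) = 0 then zeta e ^ mv.2 else 1)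
      else 1) * q t

noncomputable def SQ (e n : ℕ) : List (ℕ × ℤ) → ((Fin n → Fin n) × (Fin n → ℂ))
  | [] => (id, fun _ => 1)
  | mv :: ms => (stepTf n mv (SQ e n ms).1, stepQf e n mv (SQ e n ms).1 (SQ e n ms).2)

def ValidMv (n : ℕ) (mv : ℕ × ℤ) : Prop := mv.1 = 0 ∨ (1 ≤ mv.1 ∧ mv.1 + 2 ≤ n)

noncomputable def matOf (e n : ℕ) (mv : ℕ × ℤ) : Matrix (Fin n) (Fin n) ℂ :=
  if mv.1 = 0 then tmat e n mv.2 else smat n (mv.1 + 2)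

lemma prod_eq_SQ {e n : ℕ} (hn : 2 ≤ n) :
    ∀ ms : List (ℕ × ℤ), (∀ mv ∈ ms, ValidMv n mv) →
      (ms.map (matOf e n)).prod = tok n (SQ e n ms).1 (SQ e n ms).2 := by
  intro ms
  induction ms with
  | nil =>
    intro _
    simp only [List.map_nil, List.prod_nil, SQ]
    exact (tok_id_one n).symm
  | cons mv ms ih =>
    intro hv
    have hvtail : ∀ m ∈ ms, ValidMv n m := fun m hm => hv m (List.mem_cons_of_mem mv hm)
    rw [List.map_cons, List.prod_cons, ih hvtail]
    rcases hv mv List.mem_cons_self with h0 | ⟨h1, h2⟩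
    · rw [matOf, if_pos h0]
      rw [tmat_mul_tok mv.2 hn]
      show _ = tok n (stepTf n mv (SQ e n ms).1) (stepQf e n mv (SQ e n ms).1 (SQ e n ms).2)
      apply tok_congr
      · intro t; simp [stepTf, h0]
      · intro t; simp [stepQf, h0]
    · rw [matOf, if_neg (by omega)]
      rw [smat_mul_tok (mv.1 + 2) (by omega) h2]
      show _ = tok n (stepTf n mv (SQ e n ms).1) (stepQf e n mv (SQ e n ms).1 (SQ e n ms).2)
      have hco : mv.1 + 2 - 2 = mv.1 := by omega
      apply tok_congr
      · intro t; simp [stepTf, hco]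
      · intro t
        simp only [stepQf]
        rw [if_neg (by omega : ¬ mv.1 = 0), one_mul]

lemma SQ_fst_inj (e n : ℕ) : ∀ ms : List (ℕ × ℤ), Function.Injective (SQ e n ms).1 := by
  intro ms
  induction ms with
  | nil => exact fun a b h => h
  | cons mv ms ih =>
    intro a b hab
    exact ih (swf_inj mv.1 hab)

lemma SQ_snd_ne_zero (e n : ℕ) : ∀ ms : List (ℕ × ℤ), ∀ t, (SQ e n ms).2 t ≠ 0 := by
  intro ms
  induction ms with
  | nil => intro t; simp [SQ]
  | cons mv ms ih =>
    intro t
    show stepQf e n mv (SQ e n ms).1 (SQ e n ms).2 t ≠ 0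
    apply mul_ne_zero _ (ih t)
    split_ifs <;> first
      | exact one_ne_zero
      | exact zpow_ne_zero _ (zeta_ne_zero e)

lemma xset_moves {e n : ℕ} :
    ∀ l : List (Matrix (Fin n) (Fin n) ℂ), (∀ x ∈ l, x ∈ Xset e n) →
      ∃ ms : List (ℕ × ℤ), l = ms.map (matOf e n) ∧ ∀ mv ∈ ms, ValidMv n mv := by
  intro l
  induction l with
  | nil => exact fun _ => ⟨[], by simp⟩
  | cons x l ih =>
    intro hX
    obtain ⟨ms, hms, hval⟩ := ih (fun y hy => hX y (List.mem_cons_of_mem x hy))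
    rcases hX x List.mem_cons_self with ⟨i, hi, hxi⟩ | ⟨j, hj3, hjn, hxj⟩
    · refine ⟨(0, (i : ℤ)) :: ms, ?_, ?_⟩
      · rw [List.map_cons, ← hms, hxi, matOf, if_pos rfl]
      · intro mv hmv
        rcases List.mem_cons.mp hmv with rfl | h
        · left; rfl
        · exact hval mv h
    · refine ⟨(j - 2, 0) :: ms, ?_, ?_⟩
      · rw [List.map_cons, ← hms, hxj]
        have h2 : matOf e n (j - 2, (0 : ℤ)) = smat n j := by
          simp only [matOf]
          rw [if_neg (show ¬((j - 2, (0 : ℤ)).1 = 0) by show ¬(j - 2 = 0); omega)]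
          rw [show (j - 2, (0 : ℤ)).1 + 2 = j by show j - 2 + 2 = j; omega]
        rw [h2]
      · intro mv hmv
        rcases List.mem_cons.mp hmv with rfl | h
        · right
          refine ⟨?_, ?_⟩
          · show 1 ≤ j - 2; omega
          · show j - 2 + 2 ≤ n; omega
        · exact hval mv h

lemma iff_of_noflip (D : ℕ → Prop) (a : ℕ) : ∀ b, a ≤ b →
    (∀ k, a ≤ k → k < b → (D k ↔ D (k + 1))) → (D a ↔ D b) := by
  intro b hab
  induction b, hab using Nat.le_induction with
  | base => exact fun _ => Iff.rfl
  | succ b hb ih =>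
    intro h
    exact (ih (fun k hk hkb => h k hk (by omega))).trans (h b hb (by omega))

lemma nn_sub : ∀ n : ℕ, n * (n - 1) = n * n - n := by
  intro n
  cases n with
  | zero => rfl
  | succ k => rw [Nat.succ_sub_one, Nat.mul_succ, Nat.add_sub_cancel]

lemma cross (n r : ℕ) (T : ℕ → Fin n → ℕ)
    (h0 : ∀ t : Fin n, T 0 t = (t : ℕ))
    (hr : ∀ t : Fin n, T r t = (t : ℕ))
    (hinj : ∀ k, Function.Injective (T k))
    (hstep : ∀ k, k < r → ∃ m, ∀ t, T (k + 1) t =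
        if T k t = m then m + 1 else if T k t = m + 1 then m else T k t)
    (hvisit : ∀ t : Fin n, (t : ℕ) ≠ 0 → ∃ k, k ≤ r ∧ T k t = 0) :
    n * (n - 1) ≤ r := by
  classical
  set flip : ℕ → Fin n × Fin n → Prop :=
    fun k p => ¬ (T k p.1 < T k p.2 ↔ T (k + 1) p.1 < T (k + 1) p.2) with hflip
  set S : Finset (ℕ × (Fin n × Fin n)) :=
    (Finset.range r ×ˢ Finset.univ.offDiag).filter (fun x => flip x.1 x.2) with hS
  -- per-pair lower bound
  have claimA : ∀ p ∈ (Finset.univ : Finset (Fin n)).offDiag,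
      2 ≤ (S.filter fun x => x.2 = p).card := by
    intro p hp
    obtain ⟨a, b⟩ := p
    have hab : a ≠ b := (Finset.mem_offDiag.mp hp).2.2
    have habv : (a : ℕ) ≠ (b : ℕ) := fun h => hab (Fin.val_injective h)
    have hc : ((if (a : ℕ) < (b : ℕ) then b else a : Fin n) : ℕ) ≠ 0 := by
      split_ifs <;> omega
    obtain ⟨ks, hksr, hks0⟩ := hvisit _ hc
    have hstar : ¬ ((T ks a < T ks b) ↔ ((a : ℕ) < (b : ℕ))) := by
      intro hiff
      by_cases hab' : (a : ℕ) < (b : ℕ)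
      · rw [if_pos hab'] at hks0
        have hne : T ks a ≠ T ks b := fun h => hab (hinj ks h)
        have := hiff.mpr hab'
        omega
      · rw [if_neg hab'] at hks0
        have hne : T ks a ≠ T ks b := fun h => hab (hinj ks h)
        have := hiff.mp (by omega)
        omega
    have hD0 : (T 0 a < T 0 b) ↔ ((a : ℕ) < (b : ℕ)) := by rw [h0, h0]
    have hDr : (T r a < T r b) ↔ ((a : ℕ) < (b : ℕ)) := by rw [hr, hr]
    have exflip1 : ∃ k1, k1 < ks ∧ flip k1 (a, b) := by
      by_contra hno
      have hno' : ∀ k, k < ks → ¬ flip k (a, b) := fun k hk hf => hno ⟨k, hk, hf⟩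
      have hiff := iff_of_noflip (fun k => T k a < T k b) 0 ks (Nat.zero_le _)
        (fun k _ hk => not_not.mp (hno' k hk))
      exact hstar (hiff.symm.trans hD0)
    have exflip2 : ∃ k2, ks ≤ k2 ∧ k2 < r ∧ flip k2 (a, b) := by
      by_contra hno
      have hno' : ∀ k, ks ≤ k → k < r → ¬ flip k (a, b) :=
        fun k hk hk' hf => hno ⟨k, hk, hk', hf⟩
      have hiff := iff_of_noflip (fun k => T k a < T k b) ks r hksr
        (fun k hk hk' => not_not.mp (hno' k hk hk'))
      exact hstar (hiff.trans hDr)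
    obtain ⟨k1, hk1, hf1⟩ := exflip1
    obtain ⟨k2, hk21, hk2r, hf2⟩ := exflip2
    have hmem : ∀ k, k < r → flip k (a, b) → (k, (a, b)) ∈ S.filter (fun x => x.2 = (a, b)) := by
      intro k hkr hfk
      rw [Finset.mem_filter, hS, Finset.mem_filter, Finset.mem_product]
      exact ⟨⟨⟨Finset.mem_range.mpr hkr, hp⟩, hfk⟩, rfl⟩
    rw [show (2 : ℕ) = 1 + 1 by rfl]
    apply Nat.succ_le_of_lt
    rw [Finset.one_lt_card]
    refine ⟨(k1, (a, b)), hmem k1 (by omega) hf1, (k2, (a, b)), hmem k2 hk2r hf2, ?_⟩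
    simp only [ne_eq, Prod.mk.injEq]
    intro h
    omega
  -- per-step upper bound
  have claimB : ∀ k ∈ Finset.range r, (S.filter fun x => x.1 = k).card ≤ 2 := by
    intro k hk
    obtain ⟨m, hm⟩ := hstep k (Finset.mem_range.mp hk)
    have key : ∀ x ∈ S.filter (fun x => x.1 = k),
        (T k x.2.1 = m ∧ T k x.2.2 = m + 1) ∨ (T k x.2.1 = m + 1 ∧ T k x.2.2 = m) := by
      intro x hx
      rw [Finset.mem_filter] at hx
      obtain ⟨hxS, hx1⟩ := hx
      rw [hS, Finset.mem_filter] at hxS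
      have hfx := hxS.2
      rw [hx1] at hfx
      by_contra hcon
      apply hfx
      rw [hm x.2.1, hm x.2.2]
      push_neg at hcon
      split_ifs <;> omega
    calc (S.filter fun x => x.1 = k).card
        ≤ (Finset.univ : Finset Bool).card := by
          apply Finset.card_le_card_of_injOn (fun x => decide (T k x.2.1 = m))
            (fun _ _ => Finset.mem_univ _)
          intro x hx y hy hxy
          have hxk : x.1 = k := (Finset.mem_filter.mp hx).2
          have hyk : y.1 = k := (Finset.mem_filter.mp hy).2
          have hdec : (T k x.2.1 = m) ↔ (T k y.2.1 = m) := by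
            constructor <;> intro h <;>
              [skip; skip] <;> simp [h] at hxy <;> simpa using hxy
          rcases key x hx with ⟨hx1, hx2⟩ | ⟨hx1, hx2⟩ <;>
            rcases key y hy with ⟨hy1, hy2⟩ | ⟨hy1, hy2⟩
          · have e1 : x.2.1 = y.2.1 := hinj k (by rw [hx1, hy1])
            have e2 : x.2.2 = y.2.2 := hinj k (by rw [hx2, hy2])
            exact Prod.ext (by rw [hxk, hyk]) (Prod.ext e1 e2)
          · exfalso; have := hdec.mp hx1; omega
          · exfalso; have := hdec.mpr hy1; omega
          · have e1 : x.2.1 = y.2.1 := hinj k (by rw [hx1, hy1])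
            have e2 : x.2.2 = y.2.2 := hinj k (by rw [hx2, hy2])
            exact Prod.ext (by rw [hxk, hyk]) (Prod.ext e1 e2)
      _ = 2 := by simp
  -- counting
  have hcount1 : S.card = ∑ k ∈ Finset.range r, (S.filter fun x => x.1 = k).card := by
    apply Finset.card_eq_sum_card_fiberwise
    intro x hx
    simp only [Finset.mem_coe, hS, Finset.mem_filter, Finset.mem_product] at hx ⊢
    exact hx.1.1
  have hcount2 : S.card = ∑ p ∈ (Finset.univ : Finset (Fin n)).offDiag,
      (S.filter fun x => x.2 = p).card := by
    apply Finset.card_eq_sum_card_fiberwise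
    intro x hx
    simp only [Finset.mem_coe, hS, Finset.mem_filter, Finset.mem_product] at hx ⊢
    exact hx.1.2
  have hup : S.card ≤ 2 * r := by
    rw [hcount1]
    calc ∑ k ∈ Finset.range r, (S.filter fun x => x.1 = k).card
        ≤ ∑ _k ∈ Finset.range r, 2 := Finset.sum_le_sum claimB
      _ = 2 * r := by simp [Finset.sum_const, Finset.card_range, Nat.mul_comm]
  have hlow : 2 * (n * n - n) ≤ S.card := by
    rw [hcount2]
    calc (2 : ℕ) * (n * n - n)
        = ∑ _p ∈ (Finset.univ : Finset (Fin n)).offDiag, 2 := by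
          rw [Finset.sum_const, Finset.offDiag_card, Finset.card_univ, Fintype.card_fin]
          rw [smul_eq_mul, Nat.mul_comm]
      _ ≤ _ := Finset.sum_le_sum claimA
  rw [nn_sub]
  have : 2 * (n * n - n) ≤ 2 * r := le_trans hlow hup
  omega

lemma lam_entries {e n : ℕ} (hn : 2 ≤ n) (ms : List (ℕ × ℤ))
    (hfin : lam e n = tok n (SQ e n ms).1 (SQ e n ms).2) :
    (∀ b : Fin n, (SQ e n ms).1 b = b) ∧
    (∀ b : Fin n, (b : ℕ) ≠ 0 → (SQ e n ms).2 b = zeta e) := by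
  have hfix : ∀ b : Fin n, (SQ e n ms).1 b = b := by
    intro b
    by_contra hne
    have h1 : lam e n ((SQ e n ms).1 b) b = 0 := Matrix.diagonal_apply_ne _ hne
    have h2 : tok n (SQ e n ms).1 (SQ e n ms).2 ((SQ e n ms).1 b) b = (SQ e n ms).2 b := by
      simp [tok]
    rw [hfin, h2] at h1
    exact SQ_snd_ne_zero e n ms b h1
  refine ⟨hfix, fun b hb => ?_⟩
  have h2 : tok n (SQ e n ms).1 (SQ e n ms).2 b b = (SQ e n ms).2 b := by
    simp [tok, hfix b]
  have h1 : lam e n b b = zeta e := by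
    simp [lam, Matrix.diagonal_apply_eq, hb]
  rw [hfin, h2] at h1
  exact h1

lemma lower_bound {e n : ℕ} (he : 2 ≤ e) (hn : 2 ≤ n)
    (l : List (Matrix (Fin n) (Fin n) ℂ)) (hX : ∀ x ∈ l, x ∈ Xset e n)
    (hprod : l.prod = lam e n) : n * (n - 1) ≤ l.length := by
  obtain ⟨ms, rfl, hval⟩ := xset_moves l hX
  rw [List.length_map]
  set r := ms.length with hrdef
  have hfin : lam e n = tok n (SQ e n ms).1 (SQ e n ms).2 := by
    rw [← hprod, prod_eq_SQ hn ms hval]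
  obtain ⟨hfix, hq⟩ := lam_entries hn ms hfin
  -- trajectory
  set Tk : ℕ → Fin n → ℕ := fun k t => ((SQ e n (ms.drop (r - k))).1 t : ℕ) with hTk
  have htrans : ∀ k, k < r → ∃ mv, mv ∈ ms ∧
      SQ e n (ms.drop (r - (k + 1))) =
        (stepTf n mv (SQ e n (ms.drop (r - k))).1,
         stepQf e n mv (SQ e n (ms.drop (r - k))).1 (SQ e n (ms.drop (r - k))).2) := by
    intro k hk
    have h1 : r - (k + 1) < ms.length := by omega
    refine ⟨ms[r - (k + 1)], List.getElem_mem _, ?_⟩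
    have h2 : ms.drop (r - (k + 1)) = ms[r - (k + 1)] :: ms.drop (r - k) := by
      have h3 : r - (k + 1) + 1 = r - k := by omega
      rw [List.drop_eq_getElem_cons h1, h3]
    rw [h2]
    rfl
  apply cross n r Tk
  · intro t
    rw [hTk]
    simp only [Nat.sub_zero]
    rw [List.drop_length]
    rfl
  · intro t
    rw [hTk]
    simp only [Nat.sub_self, List.drop_zero]
    rw [hfix t]
  · intro k
    exact fun a b h => SQ_fst_inj e n _ (Fin.val_injective h)
  · intro k hk
    obtain ⟨mv, hmv, heq⟩ := htrans k hk
    have hv := hval mv hmv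
    have hlt : mv.1 + 1 < n := by
      rcases hv with h | ⟨h1, h2⟩ <;> omega
    refine ⟨mv.1, fun t => ?_⟩
    rw [hTk]
    simp only
    rw [heq]
    show ((swf n mv.1 ((SQ e n (ms.drop (r - k))).1 t) : Fin n) : ℕ) = _
    rw [swf_coe mv.1 hlt]
  · intro t ht
    by_contra hno
    have hno' : ∀ k, k ≤ r → Tk k t ≠ 0 := by
      intro k hk h
      exact hno ⟨k, hk, h⟩
    have hq1 : ∀ k, k ≤ r → (SQ e n (ms.drop (r - k))).2 t = 1 := by
      intro k
      induction k with
      | zero =>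
        intro _
        simp only [Nat.sub_zero]
        rw [List.drop_length]
        rfl
      | succ k ih =>
        intro hk1
        obtain ⟨mv, hmv, heq⟩ := htrans k (by omega)
        rw [heq]
        show stepQf e n mv _ _ t = 1
        simp only [stepQf]
        by_cases h0 : mv.1 = 0
        · rw [if_pos h0]
          by_cases hT1 : (((SQ e n (ms.drop (r - k))).1 t : Fin n) : ℕ) = 1
          · exfalso
            apply hno' (k + 1) hk1
            rw [hTk]
            simp only
            rw [heq]
            show ((swf n mv.1 ((SQ e n (ms.drop (r - k))).1 t) : Fin n) : ℕ) = 0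
            have hlt : mv.1 + 1 < n := by omega
            rw [swf_coe mv.1 hlt, h0]
            simp [hT1, show ¬ ((((SQ e n (ms.drop (r - k))).1 t : Fin n) : ℕ) = 0) by omega]
          · by_cases hT0 : (((SQ e n (ms.drop (r - k))).1 t : Fin n) : ℕ) = 0
            · exact absurd hT0 (hno' k (by omega))
            · rw [if_neg hT1, if_neg hT0, ih (by omega), mul_one]
        · rw [if_neg h0, ih (by omega), mul_one]
    have hfq : (SQ e n (ms.drop (r - r))).2 t = 1 := hq1 r le_rfl
    rw [Nat.sub_self, List.drop_zero] at hfq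
    rw [hq t ht] at hfq
    exact zeta_ne_one he hfq

/-- `λ = diag(ζ_e^{-(n-1)}, ζ_e, …, ζ_e)` has length `n(n-1)` over `X` and
the word `(t_1 t_0)(s_3 t_1 t_0 s_3)⋯(s_n⋯s_3 t_1 t_0 s_3⋯s_n)` is a reduced expression
of `λ`. -/
theorem statement_8 (e n : ℕ) (he : 2 ≤ e) (hn : 2 ≤ n) :
    len e n (lam e n) = n * (n - 1) ∧
    (∀ x ∈ lamWord e n, x ∈ Xset e n) ∧
    (lamWord e n).length = n * (n - 1) ∧
    (lamWord e n).prod = lam e n := by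
  have hmem := lamWord_mem (e := e) (n := n) he hn
  have hlen := lamWord_length (e := e) (n := n) hn
  have hprod := lamWord_prod (e := e) (n := n) hn
  refine ⟨?_, hmem, hlen, hprod⟩
  have hne : {r | ∃ l : List (Matrix (Fin n) (Fin n) ℂ),
      (∀ x ∈ l, x ∈ Xset e n) ∧ l.length = r ∧ l.prod = lam e n}.Nonempty :=
    ⟨n * (n - 1), lamWord e n, hmem, hlen, hprod⟩
  rw [len]
  apply le_antisymm
  · exact Nat.sInf_le ⟨lamWord e n, hmem, hlen, hprod⟩
  · obtain ⟨l, hXl, hlenl, hprodl⟩ := Nat.sInf_mem hne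
    calc n * (n - 1) ≤ l.length := lower_bound he hn l hXl hprodl
      _ = _ := hlenl
end

section
/- Let w ∈ G(e,e,n) with w[1,c_1] = a_1 and w[2,c_2] = a_2 the nonzero entries on rows 1 and 2. If c_1 < c_2, then for every 0 ≤ k ≤ e-1, ℓ(t_k w) = ℓ(w) − 1 if and only if a_2 ≠ 1. If c_1 > c_2, then for every 0 ≤ k ≤ e-1, ℓ(t_k w) = ℓ(w) − 1 if and only if a_1 = ζ_e^{-k}. -/
open Matrix Complex
open scoped Classical

namespace St9

variable {n e : ℕ}

/-- The unique nonzero column of row `i` (via choice). -/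
noncomputable def col (w : Matrix (Fin n) (Fin n) ℂ) (i : Fin n) : Fin n :=
  if h : ∃ j, w i j ≠ 0 then h.choose else i

def Mono (w : Matrix (Fin n) (Fin n) ℂ) : Prop :=
  (∀ i, ∃! j, w i j ≠ 0) ∧ (∀ j, ∃! i, w i j ≠ 0)

lemma Mono.col_nz {w : Matrix (Fin n) (Fin n) ℂ} (hw : Mono w) (i : Fin n) :
    w i (col w i) ≠ 0 := by
  obtain ⟨j₀, hj₀, -⟩ := hw.1 i
  rw [col, dif_pos ⟨j₀, hj₀⟩]
  exact (Exists.choose_spec (⟨j₀, hj₀⟩ : ∃ j, w i j ≠ 0))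

lemma Mono.col_eq {w : Matrix (Fin n) (Fin n) ℂ} (hw : Mono w) {i j : Fin n}
    (h : w i j ≠ 0) : col w i = j := by
  obtain ⟨j₀, hj₀, hu⟩ := hw.1 i
  rw [hu _ (hw.col_nz i), hu _ h]

lemma Mono.col_inj {w : Matrix (Fin n) (Fin n) ℂ} (hw : Mono w) :
    Function.Injective (col w) := by
  intro i i' h
  obtain ⟨r, hr, hu⟩ := hw.2 (col w i)
  have h1 := hu i (hw.col_nz i)
  have h2 := hu i' (by rw [h]; exact hw.col_nz i')
  rw [h1, h2]

/-- The pair contribution to the length formula. -/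
noncomputable def F (w : Matrix (Fin n) (Fin n) ℂ) (i j : Fin n) : ℕ :=
  if w j (col w j) ≠ 1 then 1 + (if col w i < col w j then 1 else 0)
  else (if col w j < col w i then 1 else 0)

/-- The set of ordered pairs. -/
def PP (n : ℕ) : Finset (Fin n × Fin n) := Finset.univ.filter fun q => q.1 < q.2

/-- The candidate length. -/
noncomputable def L (w : Matrix (Fin n) (Fin n) ℂ) : ℕ := ∑ q ∈ PP n, F w q.1 q.2

lemma L_one : L (1 : Matrix (Fin n) (Fin n) ℂ) = 0 := by
  have hm : Mono (1 : Matrix (Fin n) (Fin n) ℂ) := by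
    constructor <;> intro i <;> refine ⟨i, by simp [Matrix.one_apply], ?_⟩ <;>
      intro j hj <;> by_contra hne
    · exact hj (Matrix.one_apply_ne (fun hh => hne hh.symm))
    · exact hj (Matrix.one_apply_ne hne)
  · have hcol : ∀ i, col (1 : Matrix (Fin n) (Fin n) ℂ) i = i := fun i =>
      hm.col_eq (by simp [Matrix.one_apply])
    refine Finset.sum_eq_zero fun q hq => ?_
    have hlt : q.1 < q.2 := by simpa [PP] using hq
    simp [F, hcol, Matrix.one_apply, not_lt_of_gt hlt, le_of_lt hlt, asymm hlt]


/-- Data describing a generator: a monomial matrix for an adjacent transposition. -/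
structure GenData (e n : ℕ) (x : Matrix (Fin n) (Fin n) ℂ) where
  a : Fin n
  b : Fin n
  hab : (a : ℕ) + 1 = b
  scal : Fin n → ℂ
  hx : ∀ i j, x i j = if j = Equiv.swap a b i then scal i else 0
  hnz : ∀ i, scal i ≠ 0
  hinv : ∀ i, scal i * scal (Equiv.swap a b i) = 1
  hout : ∀ i, i ≠ a → i ≠ b → scal i = 1
  hch : (a : ℕ) ≠ 0 → ∀ i, scal i = 1
  hroot : ∀ i, scal i ^ e = 1

namespace GenData

variable {x w : Matrix (Fin n) (Fin n) ℂ}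

lemma hab' (D : GenData e n x) : D.a < D.b := by
  have := D.hab; exact Fin.lt_def.2 (by omega)

lemma ne_ab (D : GenData e n x) : D.a ≠ D.b := ne_of_lt D.hab'

lemma mul_apply (D : GenData e n x) (i j : Fin n) : (x * w) i j = D.scal i * w (Equiv.swap D.a D.b i) j := by
  rw [Matrix.mul_apply]
  rw [Finset.sum_eq_single (Equiv.swap D.a D.b i)]
  · rw [D.hx, if_pos rfl]
  · intro m _ hm
    rw [D.hx, if_neg hm, zero_mul]
  · intro h; exact absurd (Finset.mem_univ _) h

lemma mul_nz (D : GenData e n x) (i j : Fin n) : (x * w) i j ≠ 0 ↔ w (Equiv.swap D.a D.b i) j ≠ 0 := by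
  rw [D.mul_apply, mul_ne_zero_iff]
  exact ⟨fun h => h.2, fun h => ⟨D.hnz i, h⟩⟩

lemma mono (D : GenData e n x) (hw : Mono w) : Mono (x * w) := by
  constructor
  · intro i
    obtain ⟨j₀, hj₀, hu⟩ := hw.1 (Equiv.swap D.a D.b i)
    exact ⟨j₀, (D.mul_nz i j₀).2 hj₀, fun j hj => hu j ((D.mul_nz i j).1 hj)⟩
  · intro j
    obtain ⟨i₀, hi₀, hu⟩ := hw.2 j
    refine ⟨Equiv.swap D.a D.b i₀, ?_, ?_⟩
    · refine (D.mul_nz _ _).2 ?_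
      rwa [Equiv.swap_apply_self]
    · intro i hi
      have := hu _ ((D.mul_nz i j).1 hi)
      rw [← this, Equiv.swap_apply_self]

lemma col_mul (D : GenData e n x) (hw : Mono w) (i : Fin n) :
    col (x * w) i = col w (Equiv.swap D.a D.b i) :=
  (D.mono hw).col_eq ((D.mul_nz i _).2 (hw.col_nz _))

lemma val_mul (D : GenData e n x) (hw : Mono w) (i : Fin n) :
    (x * w) i (col (x * w) i) =
      D.scal i * w (Equiv.swap D.a D.b i) (col w (Equiv.swap D.a D.b i)) := by
  rw [D.col_mul hw, D.mul_apply]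

lemma sq (D : GenData e n x) : x * x = 1 := by
  ext i j
  rw [D.mul_apply, D.hx]
  rcases eq_or_ne j i with rfl | hne
  · rw [Equiv.swap_apply_self, if_pos rfl, Matrix.one_apply_eq]
    exact D.hinv j
  · rw [Equiv.swap_apply_self, if_neg hne, mul_zero, Matrix.one_apply_ne (Ne.symm hne)]

end GenData


lemma swap_lt {a b : Fin n} (hab : (a : ℕ) + 1 = b) {i j : Fin n} (hij : i < j)
    (hne : ¬(i = a ∧ j = b)) : Equiv.swap a b i < Equiv.swap a b j := by
  simp only [Equiv.swap_apply_def]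
  split_ifs <;> simp only [Fin.lt_def, Fin.ext_iff] at * <;> omega

namespace GenData

variable {x w : Matrix (Fin n) (Fin n) ℂ}

lemma F_swap (D : GenData e n x) (hw : Mono w) {i j : Fin n} (hij : i < j)
    (hne : ¬(i = D.a ∧ j = D.b)) :
    F (x * w) i j = F w (Equiv.swap D.a D.b i) (Equiv.swap D.a D.b j) := by
  have hs : D.scal j = 1 := by
    by_cases ha : (D.a : ℕ) = 0
    · have hb : (D.b : ℕ) = 1 := by have := D.hab; omega
      have hja : j ≠ D.a := by
        intro h
        have : (i : ℕ) < (j : ℕ) := hij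
        rw [h] at this
        omega
      have hjb : j ≠ D.b := by
        intro h
        apply hne
        have hi0 : (i : ℕ) = 0 := by
          have h1 : (i : ℕ) < (j : ℕ) := hij
          rw [h] at h1
          omega
        exact ⟨Fin.ext (by rw [hi0, ha]), h⟩
      exact D.hout j hja hjb
    · exact D.hch ha j
  rw [F, F, D.val_mul hw j, hs, one_mul, D.col_mul hw i, D.col_mul hw j]

lemma mem_PP (D : GenData e n x) : (D.a, D.b) ∈ PP n := by
  simp only [PP, Finset.mem_filter, Finset.mem_univ, true_and]
  exact D.hab'

lemma L_mul (D : GenData e n x) (hw : Mono w) :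
    L (x * w) + F w D.a D.b = L w + F (x * w) D.a D.b := by
  classical
  have h1 : F (x * w) D.a D.b + ∑ q ∈ (PP n).erase (D.a, D.b), F (x * w) q.1 q.2
      = L (x * w) := Finset.add_sum_erase (PP n) (fun q => F (x * w) q.1 q.2) D.mem_PP
  have h0 : F w D.a D.b + ∑ q ∈ (PP n).erase (D.a, D.b), F w q.1 q.2
      = L w := Finset.add_sum_erase (PP n) (fun q => F w q.1 q.2) D.mem_PP
  have hmemq : ∀ q ∈ (PP n).erase (D.a, D.b),
      q.1 < q.2 ∧ ¬(q.1 = D.a ∧ q.2 = D.b) := by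
    intro q hq
    rw [Finset.mem_erase] at hq
    refine ⟨by simpa [PP] using hq.2, fun h => hq.1 (Prod.ext h.1 h.2)⟩
  have h2 : ∑ q ∈ (PP n).erase (D.a, D.b), F (x * w) q.1 q.2
      = ∑ q ∈ (PP n).erase (D.a, D.b), F w q.1 q.2 := by
    rw [Finset.sum_congr rfl (fun q hq => D.F_swap hw (hmemq q hq).1 (hmemq q hq).2)]
    refine Finset.sum_nbij' (fun q => (Equiv.swap D.a D.b q.1, Equiv.swap D.a D.b q.2))
      (fun q => (Equiv.swap D.a D.b q.1, Equiv.swap D.a D.b q.2)) ?_ ?_ ?_ ?_ ?_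
    · intro q hq
      obtain ⟨hlt, hne⟩ := hmemq q hq
      rw [Finset.mem_erase]
      constructor
      · intro h
        rw [Prod.ext_iff] at h
        obtain ⟨ha, hb⟩ := h
        have hq1 : q.1 = D.b := by
          have := congrArg (Equiv.swap D.a D.b) ha
          rwa [Equiv.swap_apply_self, Equiv.swap_apply_left] at this
        have hq2 : q.2 = D.a := by
          have := congrArg (Equiv.swap D.a D.b) hb
          rwa [Equiv.swap_apply_self, Equiv.swap_apply_right] at this
        rw [hq1, hq2] at hlt
        exact absurd D.hab' (asymm hlt)
      · simp only [PP, Finset.mem_filter, Finset.mem_univ, true_and]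
        exact swap_lt D.hab hlt hne
    · intro q hq
      obtain ⟨hlt, hne⟩ := hmemq q hq
      rw [Finset.mem_erase]
      constructor
      · intro h
        rw [Prod.ext_iff] at h
        obtain ⟨ha, hb⟩ := h
        have hq1 : q.1 = D.b := by
          have := congrArg (Equiv.swap D.a D.b) ha
          rwa [Equiv.swap_apply_self, Equiv.swap_apply_left] at this
        have hq2 : q.2 = D.a := by
          have := congrArg (Equiv.swap D.a D.b) hb
          rwa [Equiv.swap_apply_self, Equiv.swap_apply_right] at this
        rw [hq1, hq2] at hlt
        exact absurd D.hab' (asymm hlt)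
      · simp only [PP, Finset.mem_filter, Finset.mem_univ, true_and]
        exact swap_lt D.hab hlt hne
    · intro q hq
      simp [Equiv.swap_apply_self]
    · intro q hq
      simp [Equiv.swap_apply_self]
    · intro q hq
      rfl
  omega

lemma F_flip (D : GenData e n x) (hw : Mono w) :
    F w D.a D.b + 1 = F (x * w) D.a D.b ∨ F (x * w) D.a D.b + 1 = F w D.a D.b := by
  have hca : col (x * w) D.a = col w D.b := by
    rw [D.col_mul hw, Equiv.swap_apply_left]
  have hcb : col (x * w) D.b = col w D.a := by
    rw [D.col_mul hw, Equiv.swap_apply_right]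
  have hne : ((col w D.a : ℕ)) ≠ (col w D.b : ℕ) := by
    intro h
    exact D.ne_ab (hw.col_inj (Fin.ext h))
  rw [F, F, hca, hcb]
  simp only [Fin.lt_def]
  split_ifs <;> omega

lemma L_step (D : GenData e n x) (hw : Mono w) :
    L (x * w) + 1 = L w ∨ L w + 1 = L (x * w) := by
  have h1 := D.L_mul hw
  rcases D.F_flip hw with h | h
  · right; omega
  · left; omega

end GenData


lemma zeta_ne_zero (e : ℕ) : zeta e ≠ 0 := Complex.exp_ne_zero _

lemma zeta_prim (he : e ≠ 0) : IsPrimitiveRoot (zeta e) e := by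
  have := Complex.isPrimitiveRoot_exp e he
  convert this using 2
  rfl

lemma zeta_pow_self (e : ℕ) : zeta e ^ e = 1 := by
  rcases Nat.eq_zero_or_pos e with rfl | he
  · simp
  · exact (zeta_prim (Nat.pos_iff_ne_zero.1 he)).pow_eq_one

lemma zeta_zpow_root (e : ℕ) (k : ℤ) : (zeta e ^ k) ^ e = 1 := by
  rw [← zpow_natCast (zeta e ^ k) e, ← _root_.zpow_mul, mul_comm, _root_.zpow_mul, zpow_natCast,
    zeta_pow_self, _root_.one_zpow]

/-- Generator data for `tmat`. -/
noncomputable def tGen (hn : 2 ≤ n) (k : ℤ) : GenData e n (tmat e n k) where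
  a := ⟨0, by omega⟩
  b := ⟨1, by omega⟩
  hab := rfl
  scal := fun i => if (i : ℕ) = 0 then zeta e ^ (-k) else if (i : ℕ) = 1 then zeta e ^ k else 1
  hx := by
    intro i j
    simp only [tmat, Matrix.of_apply, Equiv.swap_apply_def, Fin.ext_iff, Fin.val_mk]
    split_ifs <;> first | rfl | omega | (dsimp only [Fin.val_mk] at *; omega)
  hnz := by
    intro i
    split_ifs <;> first | exact zpow_ne_zero _ (zeta_ne_zero e) | exact one_ne_zero
  hinv := by
    intro i
    by_cases h0 : (i : ℕ) = 0
    · have hi : i = ⟨0, by omega⟩ := Fin.ext h0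
      rw [hi, Equiv.swap_apply_left]
      show zeta e ^ (-k) * zeta e ^ k = 1
      rw [← zpow_add₀ (zeta_ne_zero e)]
      simp
    · by_cases h1 : (i : ℕ) = 1
      · have hi : i = ⟨1, by omega⟩ := Fin.ext h1
        rw [hi, Equiv.swap_apply_right]
        show zeta e ^ k * zeta e ^ (-k) = 1
        rw [← zpow_add₀ (zeta_ne_zero e)]
        simp
      · have hia : i ≠ ⟨0, by omega⟩ := fun h => h0 (by rw [h])
        have hib : i ≠ ⟨1, by omega⟩ := fun h => h1 (by rw [h])
        rw [Equiv.swap_apply_of_ne_of_ne hia hib]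
        rw [if_neg h0, if_neg h1, mul_one]
  hout := by
    intro i hia hib
    have h0 : ¬((i : ℕ) = 0) := fun h => hia (Fin.ext h)
    have h1 : ¬((i : ℕ) = 1) := fun h => hib (Fin.ext h)
    rw [if_neg h0, if_neg h1]
  hch := fun h => absurd rfl h
  hroot := by
    intro i
    split_ifs <;> first | exact zeta_zpow_root e _ | exact one_pow e

/-- Generator data for `smat`. -/
noncomputable def sGen (j : ℕ) (hj3 : 3 ≤ j) (hjn : j ≤ n) : GenData e n (smat n j) where
  a := ⟨j - 2, by omega⟩
  b := ⟨j - 1, by omega⟩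
  hab := by
    show j - 2 + 1 = j - 1
    omega
  scal := fun _ => 1
  hx := by
    intro i jj
    simp only [smat, Matrix.of_apply, Equiv.swap_apply_def, Fin.ext_iff, Fin.val_mk]
    split_ifs <;> first | rfl | omega | (dsimp only [Fin.val_mk] at *; omega)
  hnz := fun _ => one_ne_zero
  hinv := fun _ => mul_one 1
  hout := fun _ _ _ => rfl
  hch := fun _ _ => rfl
  hroot := fun _ => one_pow e

lemma xset_gen {x : Matrix (Fin n) (Fin n) ℂ} (hn : 2 ≤ n) (hx : x ∈ Xset e n) :
    Nonempty (GenData e n x) := by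
  rcases hx with ⟨i, _, rfl⟩ | ⟨j, hj3, hjn, rfl⟩
  · exact ⟨tGen hn i⟩
  · exact ⟨sGen j hj3 hjn⟩

lemma mono_one : Mono (1 : Matrix (Fin n) (Fin n) ℂ) := by
  constructor <;> intro i <;> refine ⟨i, by simp [Matrix.one_apply], ?_⟩ <;>
    intro j hj <;> by_contra hne
  · exact hj (Matrix.one_apply_ne (fun hh => hne hh.symm))
  · exact hj (Matrix.one_apply_ne hne)

lemma isGeen_mono {w : Matrix (Fin n) (Fin n) ℂ} (hw : IsGeen e n w) : Mono w :=
  ⟨hw.1, hw.2.1⟩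

lemma prod_entries {w : Matrix (Fin n) (Fin n) ℂ} (hw : Mono w) :
    (∏ i, ∏ j, (if w i j ≠ 0 then w i j else 1)) = ∏ i, w i (col w i) := by
  refine Finset.prod_congr rfl fun i _ => ?_
  rw [Finset.prod_eq_single (col w i)]
  · rw [if_pos (hw.col_nz i)]
  · intro j _ hj
    rw [if_neg (fun h => hj (hw.col_eq h).symm)]
  · intro h; exact absurd (Finset.mem_univ _) h

lemma GenData.prod_scal {x : Matrix (Fin n) (Fin n) ℂ} (D : GenData e n x) :
    ∏ i, D.scal i = 1 := by
  have h1 : ∏ i ∈ ({D.a, D.b} : Finset (Fin n)), D.scal i = ∏ i, D.scal i := by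
    refine Finset.prod_subset (Finset.subset_univ _) fun i _ hi => ?_
    simp only [Finset.mem_insert, Finset.mem_singleton, not_or] at hi
    exact D.hout i hi.1 hi.2
  rw [← h1, Finset.prod_pair D.ne_ab]
  have := D.hinv D.a
  rwa [Equiv.swap_apply_left] at this

lemma GenData.isGeen {x w : Matrix (Fin n) (Fin n) ℂ} (D : GenData e n x)
    (hw : IsGeen e n w) : IsGeen e n (x * w) := by
  have hm := isGeen_mono hw
  have hm' := D.mono hm
  refine ⟨hm'.1, hm'.2, ?_, ?_⟩
  · intro i j h
    rw [D.mul_apply] at h ⊢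
    rw [mul_pow, D.hroot i, one_mul]
    exact hw.2.2.1 _ _ fun hz => h (by rw [hz, mul_zero])
  · rw [prod_entries hm']
    have h2 : ∀ i, (x * w) i (col (x * w) i)
        = D.scal i * w (Equiv.swap D.a D.b i) (col w (Equiv.swap D.a D.b i)) :=
      D.val_mul hm
    rw [Finset.prod_congr rfl fun i _ => h2 i, Finset.prod_mul_distrib, D.prod_scal,
      one_mul, Equiv.prod_comp (Equiv.swap D.a D.b) (fun i => w i (col w i))]
    have := hw.2.2.2
    rwa [prod_entries hm] at this

lemma F_def (w : Matrix (Fin n) (Fin n) ℂ) (i j : Fin n) :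
    F w i j = if w j (col w j) ≠ 1 then 1 + (if col w i < col w j then 1 else 0)
      else (if col w j < col w i then 1 else 0) := rfl

lemma GenData.no_descent_F {x w : Matrix (Fin n) (Fin n) ℂ} (D : GenData e n x)
    (hw : Mono w) (hnd : ¬(L (x * w) + 1 = L w)) :
    ¬(F (x * w) D.a D.b + 1 = F w D.a D.b) := by
  have := D.L_mul hw; omega

lemma GenData.F_mul {x w : Matrix (Fin n) (Fin n) ℂ} (D : GenData e n x) (hw : Mono w) :
    F (x * w) D.a D.b =
      if D.scal D.b * w D.a (col w D.a) ≠ 1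
      then 1 + (if col w D.b < col w D.a then 1 else 0)
      else (if col w D.a < col w D.b then 1 else 0) := by
  rw [F_def, D.val_mul hw D.b, Equiv.swap_apply_right, D.col_mul hw D.a,
    D.col_mul hw D.b, Equiv.swap_apply_left, Equiv.swap_apply_right]

lemma root_exists (he : 1 ≤ e) {a : ℂ} (ha : a ^ e = 1) :
    ∃ m : ℕ, m < e ∧ zeta e ^ m = a := by
  haveI : NeZero e := ⟨by omega⟩
  obtain ⟨m, hm, hzm⟩ := (zeta_prim (by omega)).eq_pow_of_pow_eq_one ha
  exact ⟨m, hm, hzm⟩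

lemma eq_one_of_no_descent (he : 1 ≤ e) (hn : 2 ≤ n) {w : Matrix (Fin n) (Fin n) ℂ}
    (hw : IsGeen e n w)
    (hnd : ∀ x ∈ Xset e n, ¬(L (x * w) + 1 = L w)) : w = 1 := by
  have hm := isGeen_mono hw
  have h0n : 0 < n := by omega
  have h1n : 1 < n := by omega
  -- no t-descent in F form
  have ndt : ∀ k : ℕ, k < e →
      ¬(F (tmat e n (k : ℤ) * w) (⟨0, h0n⟩ : Fin n) ⟨1, h1n⟩ + 1
        = F w ⟨0, h0n⟩ ⟨1, h1n⟩) := by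
    intro k hk
    have hmem : tmat e n (k : ℤ) ∈ Xset e n := Or.inl ⟨k, hk, rfl⟩
    have h := (tGen (e := e) hn (k : ℤ)).no_descent_F hm (hnd _ hmem)
    exact h
  -- step 1 : col w 0 < col w 1
  have hc01 : col w ⟨0, h0n⟩ < col w ⟨1, h1n⟩ := by
    have hne : col w (⟨0, h0n⟩ : Fin n) ≠ col w ⟨1, h1n⟩ := by
      intro h
      have := hm.col_inj h
      simp [Fin.ext_iff] at this
    rcases lt_or_gt_of_ne hne with h | h
    · exact h
    · exfalso
      obtain ⟨m, hme, hzm⟩ := root_exists he (hw.2.2.1 _ _ (hm.col_nz ⟨0, h0n⟩))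
      set k : ℕ := (e - m) % e with hkdef
      have hk : k < e := Nat.mod_lt _ (by omega)
      have hkm : k + m = 0 ∨ k + m = e := by
        rcases Nat.eq_zero_or_pos m with rfl | hm0
        · left
          have h00 : (e - 0) % e = 0 := by rw [Nat.sub_zero, Nat.mod_self]
          omega
        · right
          have h00 : (e - m) % e = e - m := Nat.mod_eq_of_lt (by omega)
          omega
      have hpow : zeta e ^ (k : ℕ) * w ⟨0, h0n⟩ (col w ⟨0, h0n⟩) = 1 := by
        rw [← hzm, ← pow_add]
        rcases hkm with h' | h'
        · rw [h']; exact pow_zero _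
        · rw [h']; exact zeta_pow_self e
      apply ndt k hk
      have ha : (tGen (e := e) (n := n) hn (k : ℤ)).a = ⟨0, h0n⟩ := rfl
      have hb : (tGen (e := e) (n := n) hn (k : ℤ)).b = ⟨1, h1n⟩ := rfl
      have hF := (tGen (e := e) (n := n) hn (k : ℤ)).F_mul hm
      rw [ha, hb] at hF
      have hsc : (tGen (e := e) (n := n) hn (k : ℤ)).scal ⟨1, h1n⟩
          = zeta e ^ ((k : ℕ) : ℤ) := rfl
      rw [hsc, zpow_natCast] at hF
      rw [hF, if_neg (fun hh => hh hpow), F_def]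
      have h1 : ¬ (col w (⟨0, h0n⟩ : Fin n) < col w ⟨1, h1n⟩) := asymm h
      rw [if_neg h1]
      split_ifs with hch h2 <;> first | omega | exact absurd h h2
  -- step 2 : row 1 uncharged
  have hch1 : w ⟨1, h1n⟩ (col w ⟨1, h1n⟩) = 1 := by
    by_contra hch
    apply ndt 0 (by omega)
    have ha : (tGen (e := e) (n := n) hn ((0 : ℕ) : ℤ)).a = ⟨0, h0n⟩ := rfl
    have hb : (tGen (e := e) (n := n) hn ((0 : ℕ) : ℤ)).b = ⟨1, h1n⟩ := rfl
    have hF := (tGen (e := e) (n := n) hn ((0 : ℕ) : ℤ)).F_mul hm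
    rw [ha, hb] at hF
    have h1 : ¬ (col w (⟨1, h1n⟩ : Fin n) < col w ⟨0, h0n⟩) := asymm hc01
    rw [hF, F_def, if_pos hch, if_pos hc01]
    split_ifs with hch' h2 <;> first | omega | exact absurd h2 (asymm hc01)
  -- no s-descent in F form, for 1 ≤ p, p+1 < n
  have nds : ∀ p : ℕ, 1 ≤ p → ∀ h2 : p + 1 < n,
      ¬(F (smat n (p + 2) * w) (⟨p, by omega⟩ : Fin n) ⟨p + 1, h2⟩ + 1
        = F w ⟨p, by omega⟩ ⟨p + 1, h2⟩) ∧
      F (smat n (p + 2) * w) (⟨p, by omega⟩ : Fin n) ⟨p + 1, h2⟩ =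
        (if w ⟨p, by omega⟩ (col w ⟨p, by omega⟩) ≠ 1
         then 1 + (if col w ⟨p + 1, h2⟩ < col w ⟨p, by omega⟩ then 1 else 0)
         else (if col w ⟨p, by omega⟩ < col w ⟨p + 1, h2⟩ then 1 else 0)) := by
    intro p hp h2
    have h3 : 3 ≤ p + 2 := by omega
    have h4 : p + 2 ≤ n := by omega
    have hmem : smat n (p + 2) ∈ Xset e n := Or.inr ⟨p + 2, h3, h4, rfl⟩
    have hD := (sGen (e := e) (n := n) (p + 2) h3 h4).no_descent_F hm (hnd _ hmem)
    have hF := (sGen (e := e) (n := n) (p + 2) h3 h4).F_mul hm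
    have ha : (sGen (e := e) (n := n) (p + 2) h3 h4).a = (⟨p, by omega⟩ : Fin n) :=
      Fin.ext (by show p + 2 - 2 = p; omega)
    have hb : (sGen (e := e) (n := n) (p + 2) h3 h4).b = (⟨p + 1, h2⟩ : Fin n) :=
      Fin.ext (by show p + 2 - 1 = p + 1; omega)
    have hsc : ∀ i, (sGen (e := e) (n := n) (p + 2) h3 h4).scal i = 1 := fun _ => rfl
    rw [ha, hb, hsc] at hF
    simp only [one_mul] at hF
    rw [ha, hb] at hD
    exact ⟨hD, hF⟩
  -- step 3 : rows 1..n-1 uncharged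
  have hunch : ∀ p : ℕ, 1 ≤ p → ∀ hp : p < n, w ⟨p, hp⟩ (col w ⟨p, hp⟩) = 1 := by
    intro p
    induction p with
    | zero => intro h; omega
    | succ q ih =>
      intro _ hp
      rcases Nat.eq_zero_or_pos q with rfl | hq
      · exact hch1
      · by_contra hch
        have hq1 : q + 1 < n := hp
        obtain ⟨hD, hF⟩ := nds q hq hq1
        apply hD
        rw [hF, F_def]
        have huq : w (⟨q, by omega⟩ : Fin n) (col w ⟨q, by omega⟩) = 1 :=
          ih (by omega) (by omega)
        rw [if_neg (show ¬(w (⟨q, by omega⟩ : Fin n) (col w ⟨q, by omega⟩) ≠ 1) from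
          fun hh => hh huq), if_pos hch]
        split_ifs <;> omega
  -- step 4 : row 0 uncharged
  have hch0 : w ⟨0, h0n⟩ (col w ⟨0, h0n⟩) = 1 := by
    have hprod := hw.2.2.2
    rw [prod_entries hm] at hprod
    rw [Finset.prod_eq_single (⟨0, h0n⟩ : Fin n)] at hprod
    · exact hprod
    · intro i _ hi
      have : 1 ≤ (i : ℕ) := by
        rcases Nat.eq_zero_or_pos (i : ℕ) with h | h
        · exact absurd (Fin.ext h) hi
        · exact h
      have := hunch (i : ℕ) this i.isLt
      simpa using this
    · intro h; exact absurd (Finset.mem_univ _) h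
  -- all rows uncharged
  have hallunch : ∀ i : Fin n, w i (col w i) = 1 := by
    intro i
    rcases Nat.eq_zero_or_pos (i : ℕ) with h | h
    · have : i = ⟨0, h0n⟩ := Fin.ext h
      rw [this]; exact hch0
    · have := hunch (i : ℕ) h i.isLt
      simpa using this
  -- step 5 : adjacent columns increase
  have hadj : ∀ p : ℕ, ∀ hp : p + 1 < n, col w ⟨p, by omega⟩ < col w ⟨p + 1, hp⟩ := by
    intro p hp
    rcases Nat.eq_zero_or_pos p with rfl | hp1
    · exact hc01
    · obtain ⟨hD, hF⟩ := nds p hp1 hp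
      have hne : col w (⟨p, by omega⟩ : Fin n) ≠ col w ⟨p + 1, hp⟩ := by
        intro h
        have := hm.col_inj h
        simp [Fin.ext_iff] at this
      rcases lt_or_gt_of_ne hne with h | h
      · exact h
      · exfalso
        apply hD
        rw [hF, F_def]
        have hu : w (⟨p, by omega⟩ : Fin n) (col w ⟨p, by omega⟩) = 1 :=
          hunch p hp1 (by omega)
        have hu1 : w (⟨p + 1, hp⟩ : Fin n) (col w ⟨p + 1, hp⟩) = 1 :=
          hunch (p + 1) (by omega) hp
        have hlt : col w ⟨p + 1, hp⟩ < col w ⟨p, by omega⟩ := h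
        rw [if_neg (show ¬(w (⟨p, by omega⟩ : Fin n) (col w ⟨p, by omega⟩) ≠ 1) from
            fun hh => hh hu),
          if_neg (show ¬(w (⟨p + 1, hp⟩ : Fin n) (col w ⟨p + 1, hp⟩) ≠ 1) from
            fun hh => hh hu1),
          if_neg (asymm hlt), if_pos hlt]
  -- step 6 : col w = id
  have hcolid : ∀ i : Fin n, col w i = i := by
    have hup : ∀ p : ℕ, ∀ hp : p < n, p ≤ ((col w ⟨p, hp⟩ : Fin n) : ℕ) := by
      intro p
      induction p with
      | zero => intro hp; omega
      | succ q ih =>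
        intro hp
        have h1 := ih (by omega)
        have h2 := hadj q hp
        have h3 : ((col w ⟨q, by omega⟩ : Fin n) : ℕ) < ((col w ⟨q + 1, hp⟩ : Fin n) : ℕ) := h2
        omega
    have hdown : ∀ d p : ℕ, ∀ hp : p < n, n - 1 - p = d →
        ((col w ⟨p, hp⟩ : Fin n) : ℕ) ≤ p := by
      intro d
      induction d with
      | zero =>
        intro p hp hd
        have := (col w ⟨p, hp⟩).isLt
        omega
      | succ c ih =>
        intro p hp hd
        have hp1 : p + 1 < n := by omega
        have h1 := ih (p + 1) hp1 (by omega)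
        have h2 : ((col w ⟨p, by omega⟩ : Fin n) : ℕ) < ((col w ⟨p + 1, hp1⟩ : Fin n) : ℕ) :=
          hadj p hp1
        omega
    intro i
    apply Fin.ext
    have h1 := hup (i : ℕ) i.isLt
    have h2 := hdown (n - 1 - (i : ℕ)) (i : ℕ) i.isLt rfl
    simp only [Fin.eta] at h1 h2
    omega
  -- step 7 : conclude
  ext i j
  rcases eq_or_ne j i with rfl | hne
  · have := hallunch j
    rw [hcolid j] at this
    rw [this, Matrix.one_apply_eq]
  · rw [Matrix.one_apply_ne (Ne.symm hne)]
    by_contra hz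
    have := hm.col_eq hz
    rw [hcolid i] at this
    exact hne this.symm

lemma exists_word (he : 1 ≤ e) (hn : 2 ≤ n) :
    ∀ m : ℕ, ∀ w : Matrix (Fin n) (Fin n) ℂ, IsGeen e n w → L w ≤ m →
    ∃ l : List (Matrix (Fin n) (Fin n) ℂ),
      (∀ y ∈ l, y ∈ Xset e n) ∧ l.length ≤ L w ∧ l.prod = w := by
  intro m
  induction m with
  | zero =>
    intro w hw hLw
    have hone : w = 1 := by
      apply eq_one_of_no_descent he hn hw
      intro x hx hdesc
      omega
    exact ⟨[], by simp, by simp, by rw [hone, List.prod_nil]⟩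
  | succ m ih =>
    intro w hw hLw
    by_cases hd : ∃ x ∈ Xset e n, L (x * w) + 1 = L w
    · obtain ⟨x, hx, hLx⟩ := hd
      obtain ⟨D⟩ := xset_gen hn hx
      have hw' : IsGeen e n (x * w) := D.isGeen hw
      obtain ⟨l, hl1, hl2, hl3⟩ := ih (x * w) hw' (by omega)
      refine ⟨x :: l, ?_, ?_, ?_⟩
      · intro y hy
        rcases List.mem_cons.1 hy with rfl | hy'
        · exact hx
        · exact hl1 y hy'
      · simp only [List.length_cons]
        omega
      · rw [List.prod_cons, hl3, ← mul_assoc, D.sq, one_mul]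
    · push_neg at hd
      have hone : w = 1 := eq_one_of_no_descent he hn hw hd
      exact ⟨[], by simp, by simp, by rw [hone, List.prod_nil]⟩

lemma L_prod_le (hn : 2 ≤ n) :
    ∀ l : List (Matrix (Fin n) (Fin n) ℂ), (∀ y ∈ l, y ∈ Xset e n) →
      Mono l.prod ∧ L l.prod ≤ l.length := by
  intro l
  induction l with
  | nil =>
    intro _
    rw [List.prod_nil]
    exact ⟨mono_one, le_of_eq L_one⟩
  | cons x l ih =>
    intro hl
    obtain ⟨hmono, hlen⟩ := ih fun y hy => hl y (List.mem_cons_of_mem x hy)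
    obtain ⟨D⟩ := xset_gen hn (hl x List.mem_cons_self)
    rw [List.prod_cons]
    refine ⟨D.mono hmono, ?_⟩
    rcases D.L_step hmono with h | h
    · simp only [List.length_cons]; omega
    · simp only [List.length_cons]; omega

lemma len_eq_L (he : 1 ≤ e) (hn : 2 ≤ n) {w : Matrix (Fin n) (Fin n) ℂ}
    (hw : IsGeen e n w) : len e n w = L w := by
  obtain ⟨l, hl1, hl2, hl3⟩ := exists_word he hn (L w) w hw le_rfl
  apply le_antisymm
  · exact le_trans (Nat.sInf_le ⟨l, hl1, rfl, hl3⟩) hl2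
  · refine le_csInf ⟨l.length, ⟨l, hl1, rfl, hl3⟩⟩ ?_
    rintro r ⟨l', hl'1, rfl, hl'3⟩
    have := (L_prod_le (e := e) hn l' hl'1).2
    rwa [hl'3] at this

end St9


/-- length behaviour of left multiplication by `t_k`, in terms of the
nonzero entries `a_1 = w[1,c_1]`, `a_2 = w[2,c_2]` of the first two rows. -/
theorem statement_9 (e n : ℕ) (he : 1 ≤ e) (hn : 2 ≤ n)
    (w : Matrix (Fin n) (Fin n) ℂ) (hw : IsGeen e n w)
    (c₁ c₂ : Fin n)
    (h1 : w ⟨0, by omega⟩ c₁ ≠ 0) (h2 : w ⟨1, by omega⟩ c₂ ≠ 0) :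
    (c₁ < c₂ → ∀ k : ℕ, k < e →
      (len e n (tmat e n k * w) + 1 = len e n w ↔ w ⟨1, by omega⟩ c₂ ≠ 1)) ∧
    (c₂ < c₁ → ∀ k : ℕ, k < e →
      (len e n (tmat e n k * w) + 1 = len e n w ↔
        w ⟨0, by omega⟩ c₁ = zeta e ^ (-(k : ℤ)))) := by
  have hm : St9.Mono w := St9.isGeen_mono hw
  have h0n : 0 < n := by omega
  have h1n : 1 < n := by omega
  have hc1 : St9.col w ⟨0, h0n⟩ = c₁ := hm.col_eq h1
  have hc2 : St9.col w ⟨1, h1n⟩ = c₂ := hm.col_eq h2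
  constructor
  · intro hlt k hk
    have hG : IsGeen e n (tmat e n (k : ℤ) * w) :=
      (St9.tGen (e := e) (n := n) hn (k : ℤ)).isGeen hw
    rw [St9.len_eq_L he hn hG, St9.len_eq_L he hn hw]
    have hkey := (St9.tGen (e := e) (n := n) hn (k : ℤ)).L_mul hm
    have ha : (St9.tGen (e := e) (n := n) hn (k : ℤ)).a = ⟨0, h0n⟩ := rfl
    have hb : (St9.tGen (e := e) (n := n) hn (k : ℤ)).b = ⟨1, h1n⟩ := rfl
    rw [ha, hb] at hkey
    have hFx := (St9.tGen (e := e) (n := n) hn (k : ℤ)).F_mul hm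
    rw [ha, hb, hc1, hc2] at hFx
    have hFx1 : St9.F (tmat e n (k : ℤ) * w) (⟨0, h0n⟩ : Fin n) ⟨1, h1n⟩ = 1 := by
      rw [hFx, if_neg (asymm hlt), if_pos hlt]
      split_ifs <;> omega
    rw [hFx1] at hkey
    have hFw := St9.F_def w (⟨0, h0n⟩ : Fin n) ⟨1, h1n⟩
    rw [hc1, hc2] at hFw
    by_cases hch : w ⟨1, h1n⟩ c₂ = 1
    · rw [if_neg (fun hh => hh hch), if_neg (asymm hlt)] at hFw
      rw [hFw] at hkey
      constructor
      · intro h; exfalso; omega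
      · intro h; exact absurd hch h
    · rw [if_pos hch, if_pos hlt] at hFw
      rw [hFw] at hkey
      constructor
      · intro _; exact hch
      · intro _; omega
  · intro hlt k hk
    have hG : IsGeen e n (tmat e n (k : ℤ) * w) :=
      (St9.tGen (e := e) (n := n) hn (k : ℤ)).isGeen hw
    rw [St9.len_eq_L he hn hG, St9.len_eq_L he hn hw]
    have hkey := (St9.tGen (e := e) (n := n) hn (k : ℤ)).L_mul hm
    have ha : (St9.tGen (e := e) (n := n) hn (k : ℤ)).a = ⟨0, h0n⟩ := rfl
    have hb : (St9.tGen (e := e) (n := n) hn (k : ℤ)).b = ⟨1, h1n⟩ := rfl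
    rw [ha, hb] at hkey
    have hFw := St9.F_def w (⟨0, h0n⟩ : Fin n) ⟨1, h1n⟩
    rw [hc1, hc2] at hFw
    have hFw1 : St9.F w (⟨0, h0n⟩ : Fin n) ⟨1, h1n⟩ = 1 := by
      rw [hFw, if_neg (asymm hlt), if_pos hlt]
      split_ifs <;> omega
    rw [hFw1] at hkey
    have hFx := (St9.tGen (e := e) (n := n) hn (k : ℤ)).F_mul hm
    rw [ha, hb, hc1, hc2] at hFx
    have hsc : (St9.tGen (e := e) (n := n) hn (k : ℤ)).scal ⟨1, h1n⟩
        = zeta e ^ ((k : ℕ) : ℤ) := rfl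
    rw [hsc] at hFx
    have hiff : (zeta e ^ ((k : ℕ) : ℤ) * w ⟨0, h0n⟩ c₁ = 1) ↔
        w ⟨0, h0n⟩ c₁ = zeta e ^ (-(k : ℤ)) := by
      constructor
      · intro h
        have h2 := congrArg (fun z => zeta e ^ (-(k : ℤ)) * z) h
        replace h2 : zeta e ^ (-(k : ℤ)) * (zeta e ^ ((k : ℕ) : ℤ) * w ⟨0, h0n⟩ c₁) = zeta e ^ (-(k : ℤ)) * 1 := h2
        rw [← mul_assoc, ← zpow_add₀ (St9.zeta_ne_zero e), neg_add_cancel, zpow_zero,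
          one_mul, mul_one] at h2
        exact h2
      · intro h
        rw [h, ← zpow_add₀ (St9.zeta_ne_zero e), add_neg_cancel, zpow_zero]
    by_cases hcond : w ⟨0, h0n⟩ c₁ = zeta e ^ (-(k : ℤ))
    · rw [if_neg (fun hh => hh (hiff.2 hcond)), if_neg (asymm hlt)] at hFx
      rw [hFx] at hkey
      constructor
      · intro _; exact hcond
      · intro _; omega
    · rw [if_pos (fun hh => hcond (hiff.1 hh)), if_pos hlt] at hFx
      rw [hFx] at hkey
      constructor
      · intro h; exfalso; omega
      · intro h; exact absurd h hcond
end

section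
/- Let w, w' ∈ G(e,e,n) with reduced expression x_1 x_2 ⋯ x_r of w' over X. Then w' ≼ w (i.e., w = w'w'' with ℓ(w) = ℓ(w') + ℓ(w'')) if and only if for all 1 ≤ i ≤ r, ℓ(x_i x_{i-1} ⋯ x_1 w) = ℓ(x_{i-1} ⋯ x_1 w) − 1. -/
open Matrix Complex
open scoped Classical

noncomputable def Pmat {n : ℕ} (σ : Equiv.Perm (Fin n)) (c : Fin n → ℂ) :
    Matrix (Fin n) (Fin n) ℂ :=
  Matrix.of fun i j => if j = σ i then c i else 0

lemma Pmat_mul {n : ℕ} (σ τ : Equiv.Perm (Fin n)) (c d : Fin n → ℂ) :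
    Pmat σ c * Pmat τ d = Pmat (σ.trans τ) (fun i => c i * d (σ i)) := by
  ext i j
  rw [Matrix.mul_apply, Finset.sum_eq_single (σ i)]
  · simp [Pmat, Equiv.trans_apply, mul_ite, mul_zero]; congr
  · intro k _ hk; simp [Pmat, hk]
  · simp

lemma Pmat_one {n : ℕ} : Pmat (Equiv.refl (Fin n)) (fun _ => 1) = 1 := by
  ext i j
  simp [Pmat, Matrix.one_apply, eq_comm]

lemma isGeen_Pmat {e n : ℕ} (σ : Equiv.Perm (Fin n)) (c : Fin n → ℂ)
    (h0 : ∀ i, c i ≠ 0) (hce : ∀ i, c i ^ e = 1) (hp : ∏ i, c i = 1) :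
    IsGeen e n (Pmat σ c) := by
  have key : ∀ i j, Pmat σ c i j ≠ 0 ↔ j = σ i := by
    intro i j
    constructor
    · intro h; by_contra hj; simp [Pmat, hj] at h
    · intro h; simpa [Pmat, h] using h0 i
  refine ⟨fun i => ⟨σ i, ?_, fun j hj => (key i j).1 hj⟩,
    fun j => ⟨σ.symm j, ?_, fun i hi => ?_⟩, fun i j hij => ?_, ?_⟩
  · simpa using (key i (σ i)).2 rfl
  · exact (key _ j).2 (by simp)
  · have := (key i j).1 hi; rw [this]; simp
  · have hj := (key i j).1 hij
    subst hj
    simpa [Pmat] using hce i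
  · have inner : ∀ i, (∏ j, (if Pmat σ c i j ≠ 0 then Pmat σ c i j else 1)) = c i := by
      intro i
      rw [Finset.prod_eq_single (σ i)]
      · simp [Pmat, h0 i]
      · intro j _ hj
        have : ¬ Pmat σ c i j ≠ 0 := fun h => hj ((key i j).1 h)
        simp [this]
      · simp
    rw [Finset.prod_congr rfl (fun i _ => inner i), hp]

lemma isGeen_exists {e n : ℕ} {A : Matrix (Fin n) (Fin n) ℂ} (hA : IsGeen e n A) :
    ∃ (σ : Equiv.Perm (Fin n)) (c : Fin n → ℂ),
      (∀ i, c i ≠ 0) ∧ (∀ i, c i ^ e = 1) ∧ (∏ i, c i = 1) ∧ A = Pmat σ c := by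
  obtain ⟨hrow, hcol, hpow, hprod⟩ := hA
  choose f hf hf' using hrow
  have hinj : Function.Injective f := by
    intro i i' h
    obtain ⟨g, hg, hg'⟩ := hcol (f i)
    exact (hg' i (hf i)).trans (hg' i' (by rw [h]; exact hf i')).symm
  have hbij : Function.Bijective f := (Finite.injective_iff_bijective).1 hinj
  let σ : Equiv.Perm (Fin n) := Equiv.ofBijective f hbij
  have hσ : ∀ i, σ i = f i := fun i => rfl
  refine ⟨σ, fun i => A i (f i), fun i => hf i, fun i => hpow _ _ (hf i), ?_, ?_⟩
  · rw [← hprod]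
    refine (Finset.prod_congr rfl (fun i _ => ?_)).symm
    rw [Finset.prod_eq_single (f i)]
    · simp [hf i]
    · intro j _ hj
      have : ¬ A i j ≠ 0 := fun h => hj (hf' i j h)
      simp [this]
    · simp
  · ext i j
    by_cases h : j = f i
    · simp [Pmat, h, hσ]
    · have : A i j = 0 := by
        by_contra h'
        exact h (hf' i j h')
      simp [Pmat, this, hσ, h]

lemma isGeen_mul {e n : ℕ} {A B : Matrix (Fin n) (Fin n) ℂ}
    (hA : IsGeen e n A) (hB : IsGeen e n B) : IsGeen e n (A * B) := by
  obtain ⟨σ, c, hc0, hce, hcp, rfl⟩ := isGeen_exists hA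
  obtain ⟨τ, d, hd0, hde, hdp, rfl⟩ := isGeen_exists hB
  rw [Pmat_mul]
  refine isGeen_Pmat _ _ (fun i => mul_ne_zero (hc0 i) (hd0 _))
    (fun i => by rw [mul_pow, hce, hde, one_mul]) ?_
  rw [Finset.prod_mul_distrib, hcp, one_mul, Equiv.prod_comp σ d, hdp]


lemma zeta_pow_e {e : ℕ} (he : 1 ≤ e) : zeta e ^ e = 1 := by
  rw [zeta, ← Complex.exp_nat_mul]
  have h0 : (e : ℂ) ≠ 0 := Nat.cast_ne_zero.2 (by omega)
  rw [mul_div_assoc', mul_comm, mul_div_assoc, div_self h0, mul_one, Complex.exp_two_pi_mul_I]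

lemma zeta_zpow_pow {e : ℕ} (he : 1 ≤ e) (i : ℤ) : (zeta e ^ i) ^ e = 1 := by
  rw [← zpow_natCast (zeta e ^ i), ← _root_.zpow_mul, mul_comm, _root_.zpow_mul, zpow_natCast,
    zeta_pow_e he, _root_.one_zpow]

/-- `t`-generator coefficient function. -/
noncomputable def tcoef (e n : ℕ) (hn : 2 ≤ n) (i : ℤ) : Fin n → ℂ :=
  fun a => if a = (⟨0, by omega⟩ : Fin n) then zeta e ^ (-i)
    else if a = (⟨1, by omega⟩ : Fin n) then zeta e ^ i else 1

lemma tmat_eq_Pmat (e n : ℕ) (hn : 2 ≤ n) (i : ℤ) :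
    tmat e n i = Pmat (Equiv.swap (⟨0, by omega⟩ : Fin n) ⟨1, by omega⟩) (tcoef e n hn i) := by
  ext a b
  simp only [tmat, Pmat, tcoef, Matrix.of_apply, Equiv.swap_apply_def, Fin.ext_iff]
  have ha := a.isLt; have hb := b.isLt
  split_ifs <;> simp -failIfUnchanged only [Fin.val_mk] at * <;> first | rfl | omega

/-- `s`-generator permutation. -/
def sperm (n j : ℕ) (h3 : 3 ≤ j) (hjn : j ≤ n) : Equiv.Perm (Fin n) :=
  Equiv.swap (⟨j - 2, by omega⟩ : Fin n) ⟨j - 1, by omega⟩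

lemma smat_eq_Pmat (n j : ℕ) (h3 : 3 ≤ j) (hjn : j ≤ n) :
    smat n j = Pmat (sperm n j h3 hjn) (fun _ => 1) := by
  ext a b
  simp only [smat, Pmat, sperm, Matrix.of_apply, Equiv.swap_apply_def, Fin.ext_iff]
  have ha := a.isLt; have hb := b.isLt
  split_ifs <;> simp -failIfUnchanged only [Fin.val_mk] at * <;> first | rfl | omega

lemma tcoef_prod (e n : ℕ) (hn : 2 ≤ n) (i : ℤ) : ∏ a, tcoef e n hn i a = 1 := by
  have hne : (⟨0, by omega⟩ : Fin n) ≠ ⟨1, by omega⟩ := by simp [Fin.ext_iff]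
  have : ∀ a, tcoef e n hn i a =
      (if a = (⟨0, by omega⟩ : Fin n) then zeta e ^ (-i) else 1) *
      (if a = (⟨1, by omega⟩ : Fin n) then zeta e ^ i else 1) := by
    intro a
    by_cases h0 : a = (⟨0, by omega⟩ : Fin n) <;> by_cases h1 : a = (⟨1, by omega⟩ : Fin n) <;>
      simp_all [tcoef]
  rw [Finset.prod_congr rfl (fun a _ => this a), Finset.prod_mul_distrib,
    Finset.prod_ite_eq', Finset.prod_ite_eq']
  simp only [Finset.mem_univ, if_true]
  rw [← zpow_add₀ (zeta_ne_zero e), neg_add_cancel, zpow_zero]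

lemma tcoef_ne_zero (e n : ℕ) (hn : 2 ≤ n) (i : ℤ) (a : Fin n) : tcoef e n hn i a ≠ 0 := by
  unfold tcoef
  split_ifs <;> simp [zpow_ne_zero, zeta_ne_zero]

lemma tcoef_pow (e n : ℕ) (he : 1 ≤ e) (hn : 2 ≤ n) (i : ℤ) (a : Fin n) :
    tcoef e n hn i a ^ e = 1 := by
  unfold tcoef
  split_ifs <;> simp [zeta_zpow_pow he]

lemma xset_isGeen {e n : ℕ} (he : 1 ≤ e) (hn : 2 ≤ n) {x : Matrix (Fin n) (Fin n) ℂ}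
    (hx : x ∈ Xset e n) : IsGeen e n x := by
  rcases hx with ⟨i, _, rfl⟩ | ⟨j, h3, hjn, rfl⟩
  · rw [tmat_eq_Pmat e n hn]
    exact isGeen_Pmat _ _ (tcoef_ne_zero e n hn i) (tcoef_pow e n he hn i) (tcoef_prod e n hn i)
  · rw [smat_eq_Pmat n j h3 hjn]
    exact isGeen_Pmat _ _ (fun _ => one_ne_zero) (fun _ => one_pow e) (by simp)

lemma xset_invol {e n : ℕ} (hn : 2 ≤ n) {x : Matrix (Fin n) (Fin n) ℂ}
    (hx : x ∈ Xset e n) : x * x = 1 := by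
  have key : ∀ (a b : Fin n) (c : Fin n → ℂ),
      (∀ i, c i * c (Equiv.swap a b i) = 1) →
      Pmat (Equiv.swap a b) c * Pmat (Equiv.swap a b) c = 1 := by
    intro a b c hc
    rw [Pmat_mul, Equiv.swap_swap]
    rw [show (fun i => c i * c ((Equiv.swap a b) i)) = fun _ => (1:ℂ) from funext hc]
    exact Pmat_one
  rcases hx with ⟨i, _, rfl⟩ | ⟨j, h3, hjn, rfl⟩
  · rw [tmat_eq_Pmat e n hn]
    apply key
    intro a
    have h1 : (zeta e ^ i)⁻¹ * zeta e ^ i = 1 :=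
      inv_mul_cancel₀ (pow_ne_zero _ (zeta_ne_zero e))
    have h2 : zeta e ^ i * (zeta e ^ i)⁻¹ = 1 :=
      mul_inv_cancel₀ (pow_ne_zero _ (zeta_ne_zero e))
    rcases eq_or_ne a (⟨0, by omega⟩ : Fin n) with h0 | h0
    · subst h0
      simp [tcoef, Equiv.swap_apply_left, Fin.ext_iff, _root_.zpow_neg, zpow_natCast, h1, h2]
    · rcases eq_or_ne a (⟨1, by omega⟩ : Fin n) with h1 | h1
      · subst h1
        simp [tcoef, Equiv.swap_apply_right, Fin.ext_iff, _root_.zpow_neg, zpow_natCast, h1, h2]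
      · rw [Equiv.swap_apply_of_ne_of_ne h0 h1]
        simp [tcoef, h0, h1]
  · rw [smat_eq_Pmat n j h3 hjn]
    exact key _ _ _ (fun _ => one_mul 1)


lemma len_le {e n : ℕ} {u : Matrix (Fin n) (Fin n) ℂ}
    (l : List (Matrix (Fin n) (Fin n) ℂ)) (hl : ∀ x ∈ l, x ∈ Xset e n) (hp : l.prod = u) :
    len e n u ≤ l.length :=
  Nat.sInf_le ⟨l, hl, rfl, hp⟩

lemma exists_min_word {e n : ℕ} {u : Matrix (Fin n) (Fin n) ℂ}
    (l : List (Matrix (Fin n) (Fin n) ℂ)) (hl : ∀ x ∈ l, x ∈ Xset e n) (hp : l.prod = u) :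
    ∃ m : List (Matrix (Fin n) (Fin n) ℂ), (∀ x ∈ m, x ∈ Xset e n) ∧ m.length = len e n u ∧ m.prod = u := by
  have h : ({r | ∃ l : List (Matrix (Fin n) (Fin n) ℂ),
      (∀ x ∈ l, x ∈ Xset e n) ∧ l.length = r ∧ l.prod = u}).Nonempty := ⟨l.length, l, hl, rfl, hp⟩
  exact Nat.sInf_mem h

lemma exists_min_word' {e n : ℕ} {u : Matrix (Fin n) (Fin n) ℂ} (h : len e n u ≠ 0) :
    ∃ m : List (Matrix (Fin n) (Fin n) ℂ), (∀ x ∈ m, x ∈ Xset e n) ∧ m.length = len e n u ∧ m.prod = u := by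
  by_cases hne : {r | ∃ l : List (Matrix (Fin n) (Fin n) ℂ),
      (∀ x ∈ l, x ∈ Xset e n) ∧ l.length = r ∧ l.prod = u}.Nonempty
  · exact Nat.sInf_mem hne
  · exfalso
    apply h
    rw [len, Set.not_nonempty_iff_eq_empty.1 hne, Nat.sInf_empty]

lemma prod_mul_reverse {n : ℕ} (l : List (Matrix (Fin n) (Fin n) ℂ))
    (h : ∀ x ∈ l, x * x = 1) : l.prod * l.reverse.prod = 1 := by
  induction l with
  | nil => simp
  | cons x l ih =>
    have hx := h x List.mem_cons_self
    have ihh := ih (fun y hy => h y (List.mem_cons_of_mem x hy))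
    simp only [List.prod_cons, List.reverse_cons, List.prod_append, List.prod_cons,
      List.prod_nil]
    rw [mul_one, mul_assoc, ← mul_assoc l.prod, ihh, one_mul, hx]

lemma reverse_mul_prod {n : ℕ} (l : List (Matrix (Fin n) (Fin n) ℂ))
    (h : ∀ x ∈ l, x * x = 1) : l.reverse.prod * l.prod = 1 := by
  have := prod_mul_reverse l.reverse (fun x hx => h x (List.mem_reverse.1 hx))
  rwa [List.reverse_reverse] at this

lemma isGeen_list_mul {e n : ℕ} {u : Matrix (Fin n) (Fin n) ℂ} (hu : IsGeen e n u)
    (l : List (Matrix (Fin n) (Fin n) ℂ)) (hl : ∀ x ∈ l, IsGeen e n x) :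
    IsGeen e n (l.prod * u) := by
  induction l with
  | nil => simpa using hu
  | cons x l ih =>
    rw [List.prod_cons, mul_assoc]
    exact isGeen_mul (hl x List.mem_cons_self)
      (ih (fun y hy => hl y (List.mem_cons_of_mem x hy)))

/-- `w' ≼ w` iff for each prefix of a reduced expression
`x_1 x_2 ⋯ x_r` of `w'`, left multiplication of `w` by the next letter decreases
the length: `ℓ(x_i ⋯ x_1 w) = ℓ(x_{i-1} ⋯ x_1 w) - 1` for all `1 ≤ i ≤ r`. -/
theorem statement_11 (e n : ℕ) (he : 1 ≤ e) (hn : 2 ≤ n)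
    (w w' : Matrix (Fin n) (Fin n) ℂ) (hw : IsGeen e n w) (hw' : IsGeen e n w')
    (l : List (Matrix (Fin n) (Fin n) ℂ)) (hl : ∀ x ∈ l, x ∈ Xset e n)
    (hprod : l.prod = w') (hred : l.length = len e n w') :
    ldvd e n w' w ↔
      ∀ i < l.length,
        len e n ((l.take (i + 1)).reverse.prod * w) + 1
          = len e n ((l.take i).reverse.prod * w) := by
  have hinv : ∀ x ∈ l, x * x = 1 := fun x hx => xset_invol hn (hl x hx)
  constructor
  · rintro ⟨w'', hg'', heq, hlen⟩
    intro i hi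
    have hlw : len e n w ≠ 0 := by omega
    obtain ⟨m, hm, hmlen, hmprod⟩ := exists_min_word' hlw
    have hw'' : w'' = l.reverse.prod * w := by
      rw [heq, ← hprod, ← mul_assoc, reverse_mul_prod l hinv, one_mul]
    obtain ⟨m'', hm'', hm''len, hm''prod⟩ :=
      exists_min_word (l.reverse ++ m)
        (fun x hx => by
          rcases List.mem_append.1 hx with h | h
          exacts [hl x (List.mem_reverse.1 h), hm x h])
        (by rw [List.prod_append, hmprod, ← hw''])
    have key : ∀ k ≤ l.length,
        len e n ((l.take k).reverse.prod * w) = (l.length - k) + len e n w'' := by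
      intro k hk
      have hl2 : l.prod = (l.take k).prod * (l.drop k).prod := by
        rw [← List.prod_append, List.take_append_drop]
      have hdrop : (l.take k).reverse.prod * w = (l.drop k).prod * w'' := by
        rw [heq, ← hprod, hl2, mul_assoc, ← mul_assoc ((l.take k).reverse.prod),
          reverse_mul_prod (l.take k) (fun x hx => hinv x (List.mem_of_mem_take hx)), one_mul]
      have h1 := len_le (l.drop k ++ m'')
        (fun x hx => by
          rcases List.mem_append.1 hx with h | h
          exacts [hl x (List.mem_of_mem_drop h), hm'' x h])
        (by rw [List.prod_append, hm''prod, ← hdrop])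
      rw [List.length_append, List.length_drop, hm''len] at h1
      obtain ⟨mk, hmk, hmklen, hmkprod⟩ := exists_min_word (l.drop k ++ m'')
        (fun x hx => by
          rcases List.mem_append.1 hx with h | h
          exacts [hl x (List.mem_of_mem_drop h), hm'' x h])
        (by rw [List.prod_append, hm''prod, ← hdrop])
      have h2 := len_le (l.take k ++ mk)
        (fun x hx => by
          rcases List.mem_append.1 hx with h | h
          exacts [hl x (List.mem_of_mem_take h), hmk x h])
        (by rw [List.prod_append, hmkprod, ← mul_assoc,
          prod_mul_reverse (l.take k) (fun x hx => hinv x (List.mem_of_mem_take hx)), one_mul])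
      rw [List.length_append, List.length_take, hmklen] at h2
      omega
    rw [key (i+1) (by omega), key i (by omega)]
    omega
  · intro H
    have step : ∀ k, k ≤ l.length → len e n ((l.take k).reverse.prod * w) + k = len e n w := by
      intro k
      induction k with
      | zero => intro _; simp
      | succ k ih =>
        intro hk
        have h1 := H k (by omega)
        have h2 := ih (by omega)
        omega
    have hstep := step l.length le_rfl
    rw [List.take_length] at hstep
    refine ⟨l.reverse.prod * w, ?_, ?_, ?_⟩
    · exact isGeen_list_mul hw l.reverse
        (fun x hx => xset_isGeen he hn (hl x (List.mem_reverse.1 hx)))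
    · rw [← hprod, ← mul_assoc, prod_mul_reverse l hinv, one_mul]
    · omega
end
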